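/- arXiv:2404.00336 — 4 statements merged into one kernel-verified Lean document; each statement's English description precedes it below -/
import Mathlib

section
/- Let K(k) = ∫₀¹ dt/√((1-t²)(1-k²t²)) for k ∈ (0,1) and K'(k) = K(√(1-k²)). Let a = (1 + √3)/√2 and t = 2a⁴/(1 + a⁴). Then t > 1 and |4·K(1/√t)/K'(1/√t) - 4.1335929781133| ≤ 2.81×10⁻¹⁴. -/
open intervalIntegral

/-- The complete elliptic integral of the first kind,
`K(k) = ∫₀¹ dt/√((1-t²)(1-k²t²))`. -/
noncomputable def ellK (k : ℝ) : ℝ :=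
  ∫ t in (0:ℝ)..1, 1 / Real.sqrt ((1 - t ^ 2) * (1 - k ^ 2 * t ^ 2))

/-- The complementary complete elliptic integral, `K'(k) = K(√(1-k²))`. -/
noncomputable def ellK' (k : ℝ) : ℝ := ellK (Real.sqrt (1 - k ^ 2))

open intervalIntegral MeasureTheory Set Real Finset


noncomputable def aseq (n : ℕ) : ℝ := ∏ i ∈ Finset.range n, ((2*i+1 : ℝ)/(2*i+2))

noncomputable def dd (n : ℕ) : ℝ := ∏ i ∈ Finset.range n, ((i:ℝ) + 1/2)

lemma aseq_zero : aseq 0 = 1 := by simp [aseq]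
lemma aseq_succ (n : ℕ) : aseq (n+1) = aseq n * ((2*n+1 : ℝ)/(2*n+2)) := by
  simp only [aseq, Finset.prod_range_succ]
lemma dd_zero : dd 0 = 1 := by simp [dd]
lemma dd_succ (n : ℕ) : dd (n+1) = dd n * ((n:ℝ) + 1/2) := by
  simp [dd, Finset.prod_range_succ]

lemma aseq_pos (n : ℕ) : 0 < aseq n := by
  apply Finset.prod_pos; intro i _; positivity

lemma dd_pos (n : ℕ) : 0 < dd n := by
  apply Finset.prod_pos; intro i _; positivity

lemma dd_eq (n : ℕ) : dd n = aseq n * (n.factorial : ℝ) := by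
  induction n with
  | zero => simp [dd_zero, aseq_zero]
  | succ n ih =>
    rw [dd_succ, aseq_succ, ih, Nat.factorial_succ]
    push_cast
    have h : (2*(n:ℝ)+2) ≠ 0 := by positivity
    field_simp

noncomputable def J (m : ℕ) : ℝ := ∫ t in (0:ℝ)..1, t^m / Real.sqrt (1 - t^2)

lemma Jint (m : ℕ) : IntervalIntegrable (fun t => t^m / Real.sqrt (1-t^2)) volume 0 1 := by
  have hrpow : IntervalIntegrable (fun x : ℝ => x ^ (-(1/2) : ℝ)) volume 0 1 :=
    intervalIntegrable_rpow' (by norm_num)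
  have h1 : IntervalIntegrable (fun x : ℝ => (1-x) ^ (-(1/2) : ℝ)) volume 0 1 := by
    have := (hrpow.comp_sub_left 1).symm
    simpa using this
  apply h1.mono_fun
  · apply Measurable.aestronglyMeasurable
    exact (measurable_id.pow_const m).div
      ((measurable_const.sub (measurable_id.pow_const 2)).sqrt)
  · rw [Filter.EventuallyLE, uIoc_of_le (by norm_num : (0:ℝ) ≤ 1)]
    filter_upwards [ae_restrict_mem measurableSet_Ioc] with t ht
    rcases eq_or_lt_of_le ht.2 with rfl | h
    · simp [Real.zero_rpow]
    · have ht0 : 0 < t := ht.1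
      have h1t : 0 < 1 - t := by linarith
      have h1t2 : 0 < 1 - t^2 := by nlinarith
      have hle : 1 - t ≤ 1 - t^2 := by nlinarith
      have hsle : Real.sqrt (1-t) ≤ Real.sqrt (1-t^2) := Real.sqrt_le_sqrt hle
      have hs1 : 0 < Real.sqrt (1-t) := Real.sqrt_pos.mpr h1t
      have hs2 : 0 < Real.sqrt (1-t^2) := Real.sqrt_pos.mpr h1t2
      rw [Real.norm_eq_abs, Real.norm_eq_abs, abs_of_nonneg (by positivity),
        abs_of_nonneg (Real.rpow_nonneg h1t.le _)]
      have hr : (1-t) ^ (-(1/2) : ℝ) = 1 / Real.sqrt (1-t) := by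
        rw [Real.rpow_neg h1t.le, ← Real.sqrt_eq_rpow, one_div]
      rw [hr]
      exact div_le_div₀ (by norm_num) (pow_le_one₀ ht0.le h.le) hs1 hsle




lemma J0int : IntervalIntegrable (fun t : ℝ => 1 / Real.sqrt (1-t^2)) volume 0 1 := by
  have := Jint 0; simpa using this

lemma J_zero : J 0 = Real.pi / 2 := by
  rw [show J 0 = ∫ t in (0:ℝ)..1, 1 / Real.sqrt (1-t^2) from by simp only [J, pow_zero]]
  have := integral_eq_sub_of_hasDeriv_right_of_le (f := Real.arcsin)
    (f' := fun t : ℝ => 1 / Real.sqrt (1-t^2)) zero_le_one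
    Real.continuous_arcsin.continuousOn
    (fun x hx => (Real.hasDerivAt_arcsin (by linarith [hx.1]) (ne_of_lt hx.2)).hasDerivWithinAt)
    J0int
  rw [this, Real.arcsin_one, Real.arcsin_zero, sub_zero]

lemma J_rec (m : ℕ) : J (2*m+2) = (2*(m:ℝ)+1)/(2*(m:ℝ)+2) * J (2*m) := by
  set r : ℝ := (2*(m:ℝ)+1)/(2*(m:ℝ)+2) with hr
  set G : ℝ → ℝ := fun t => -(t^(2*m+1) * Real.sqrt (1-t^2)) / (2*(m:ℝ)+2) with hG
  have hcont : Continuous G := by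
    apply Continuous.div_const
    exact ((continuous_pow _).mul ((continuous_const.sub (continuous_pow 2)).sqrt)).neg
  have hderiv : ∀ x ∈ Ioo (0:ℝ) 1, HasDerivAt G
      (x^(2*m+2) / Real.sqrt (1-x^2) - r * (x^(2*m) / Real.sqrt (1-x^2))) x := by
    intro x hx
    have hs : (0:ℝ) < 1 - x^2 := by nlinarith [hx.1, hx.2]
    have hsq := Real.sq_sqrt hs.le
    have hsp : 0 < Real.sqrt (1-x^2) := Real.sqrt_pos.mpr hs
    have h1 : HasDerivAt (fun t : ℝ => 1 - t^2) (-(2*x)) x := by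
      simpa using ((hasDerivAt_pow 2 x).const_sub 1)
    have h2 : HasDerivAt (fun t : ℝ => Real.sqrt (1-t^2)) (1/(2*Real.sqrt (1-x^2)) * (-(2*x))) x :=
      (Real.hasDerivAt_sqrt hs.ne').comp x h1
    have h3 : HasDerivAt (fun t : ℝ => t^(2*m+1)) ((2*(m:ℝ)+1) * x^(2*m)) x := by
      have := hasDerivAt_pow (2*m+1) x
      exact this.congr_deriv (by simp)
    have h4 := ((h3.mul h2).neg).div_const (2*(m:ℝ)+2)
    refine h4.congr_deriv (Eq.symm ?_)
    rw [hr]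
    set s := Real.sqrt (1 - x^2) with hsdef
    field_simp
    linear_combination ((2*(m:ℝ)+1) * x^(2*m)) * hsq
  have hint : IntervalIntegrable
      (fun t : ℝ => t^(2*m+2) / Real.sqrt (1-t^2) - r * (t^(2*m) / Real.sqrt (1-t^2))) volume 0 1 :=
    (Jint (2*m+2)).sub ((Jint (2*m)).const_mul r)
  have hftc := integral_eq_sub_of_hasDeriv_right_of_le zero_le_one hcont.continuousOn
    (fun x hx => (hderiv x hx).hasDerivWithinAt) hint
  have hG1 : G 1 = 0 := by simp [hG]
  have hG0 : G 0 = 0 := by simp [hG]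
  rw [hG1, hG0, sub_zero] at hftc
  rw [intervalIntegral.integral_sub (Jint (2*m+2)) ((Jint (2*m)).const_mul r),
    intervalIntegral.integral_const_mul] at hftc
  have : J (2*m+2) - r * J (2*m) = 0 := hftc
  linarith


lemma J_val (n : ℕ) : J (2*n) = Real.pi/2 * aseq n := by
  induction n with
  | zero => simpa [aseq_zero] using J_zero
  | succ n ih =>
    have h : 2*(n+1) = 2*n+2 := by ring
    rw [h, J_rec n, ih, aseq_succ]
    ring



noncomputable def ff : ℝ → ℝ := fun u => (1-u) ^ (-(1/2) : ℝ)

lemma ffCD (x : ℝ) (hx1 : x < 1) (n : ℕ) : ContDiffOn ℝ n ff (Icc 0 x) := by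
  apply ContDiffOn.rpow_const_of_ne (contDiffOn_const.sub contDiffOn_id)
  intro y hy
  have : y ≤ x := hy.2
  have : (0:ℝ) < 1 - y := by linarith
  exact this.ne'

lemma iterDeriv (x : ℝ) (hx0 : 0 < x) (hx1 : x < 1) :
    ∀ (k : ℕ), ∀ y ∈ Icc (0:ℝ) x,
      iteratedDerivWithin k ff (Icc 0 x) y = dd k * (1-y) ^ (-((k:ℝ) + 1/2)) := by
  intro k
  induction k with
  | zero =>
    intro y hy
    rw [iteratedDerivWithin_zero]
    simp [ff, dd_zero]
  | succ k ih =>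
    intro y hy
    have hud : UniqueDiffOn ℝ (Icc (0:ℝ) x) := uniqueDiffOn_Icc hx0
    rw [iteratedDerivWithin_succ]
    have hcongr : derivWithin (iteratedDerivWithin k ff (Icc 0 x)) (Icc 0 x) y
        = derivWithin (fun z => dd k * (1-z) ^ (-((k:ℝ) + 1/2))) (Icc 0 x) y :=
      derivWithin_congr ih (ih y hy)
    rw [hcongr]
    have h1y : (0:ℝ) < 1 - y := by
      have := hy.2; linarith
    have hb : HasDerivAt (fun u : ℝ => 1 - u) (-1) y := by
      simpa using (hasDerivAt_id y).const_sub 1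
    have h2 : HasDerivAt (fun u : ℝ => (1-u) ^ (-((k:ℝ) + 1/2)))
        ((-1) * (-((k:ℝ) + 1/2)) * (1-y) ^ (-((k:ℝ) + 1/2) - 1)) y :=
      hb.rpow_const (Or.inl h1y.ne')
    have h3 := h2.const_mul (dd k)
    rw [h3.hasDerivWithinAt.derivWithin (hud y hy)]
    rw [dd_succ]
    rw [show (-(((k+1:ℕ):ℝ) + 1/2)) = -((k:ℝ) + 1/2) - 1 by push_cast; ring]
    ring

lemma taylor_bounds (M : ℕ) (x : ℝ) (hx0 : 0 < x) (hx1 : x < 1) :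
    (∑ k ∈ Finset.range (M+1), aseq k * x ^ k) ≤ 1 / Real.sqrt (1-x) ∧
    1 / Real.sqrt (1-x) ≤ (∑ k ∈ Finset.range (M+1), aseq k * x ^ k)
      + ((M:ℝ)+1) * aseq (M+1) * x^(M+1) / ((1-x) * Real.sqrt (1-x)) := by
  have hud : UniqueDiffOn ℝ (Icc (0:ℝ) x) := uniqueDiffOn_Icc hx0
  have hdiff : DifferentiableOn ℝ (iteratedDerivWithin M ff (Icc 0 x)) (Ioo 0 x) :=
    ((ffCD x hx1 (M+1)).differentiableOn_iteratedDerivWithin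
      (by exact_mod_cast Nat.lt_succ_self M) hud).mono Ioo_subset_Icc_self
  obtain ⟨x', hx', heq⟩ := taylor_mean_remainder_cauchy hx0.ne
    (by rw [uIcc_of_le hx0.le]; exact ffCD x hx1 M)
    (by rw [uIcc_of_le hx0.le, uIoo_of_le hx0.le]; exact hdiff)
  rw [uIoo_of_le hx0.le] at hx'
  rw [uIcc_of_le hx0.le] at heq
  have hTay : taylorWithinEval ff M (Icc 0 x) 0 x = ∑ k ∈ Finset.range (M+1), aseq k * x ^ k := by
    rw [taylor_within_apply]
    apply Finset.sum_congr rfl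
    intro k hk
    rw [iterDeriv x hx0 hx1 k 0 (left_mem_Icc.mpr hx0.le)]
    rw [show (1:ℝ) - 0 = 1 by ring, Real.one_rpow]
    rw [smul_eq_mul, dd_eq]
    have : (k.factorial : ℝ) ≠ 0 := Nat.cast_ne_zero.mpr k.factorial_ne_zero
    field_simp
    ring
  have hx'0 : 0 < x' := hx'.1
  have hx'x : x' < x := hx'.2
  have h1x : (0:ℝ) < 1 - x := by linarith
  have h1x' : (0:ℝ) < 1 - x' := by linarith
  have hIter := iterDeriv x hx0 hx1 (M+1) x' (Ioo_subset_Icc_self hx')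
  rw [hIter, hTay] at heq
  -- ff x = 1 / sqrt (1-x)
  have hffx : ff x = 1 / Real.sqrt (1-x) := by
    rw [ff, Real.rpow_neg h1x.le, ← Real.sqrt_eq_rpow, one_div]
  rw [hffx] at heq
  rw [show (-(((M+1:ℕ):ℝ) + 1/2)) = -(((M:ℝ)+1) + 1/2) by push_cast; ring] at heq
  set R := dd (M+1) * (1-x') ^ (-(((M:ℝ)+1) + 1/2)) * (x - x') ^ M / (M.factorial : ℝ) * (x - 0)
    with hR
  have hRdef : 1 / Real.sqrt (1-x) - (∑ k ∈ Finset.range (M+1), aseq k * x ^ k) = R := heq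
  -- R ≥ 0
  have hrpow_pos : (0:ℝ) < (1-x') ^ (-(((M:ℝ)+1) + 1/2)) := Real.rpow_pos_of_pos h1x' _
  have hR0 : 0 ≤ R := by
    rw [hR]
    have h1 : (0:ℝ) ≤ (x - x')^M := pow_nonneg (by linarith) M
    have h2 : (0:ℝ) < (M.factorial : ℝ) := Nat.cast_pos.mpr M.factorial_pos
    exact mul_nonneg (div_nonneg (mul_nonneg (mul_nonneg (dd_pos (M+1)).le hrpow_pos.le) h1)
      h2.le) (by linarith)
  -- R ≤ bound
  have hkey : (1-x') ^ (-(((M:ℝ)+1) + 1/2)) * (x - x') ^ M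
      ≤ (1 / ((1-x) * Real.sqrt (1-x))) * x ^ M := by
    have hsplit : (1-x') ^ (-(((M:ℝ)+1) + 1/2))
        = (1-x') ^ (-(3/2 : ℝ)) * ((1-x')⁻¹) ^ M := by
      rw [← Real.rpow_natCast ((1-x')⁻¹) M, ← Real.rpow_neg_one (1-x'),
        ← Real.rpow_mul h1x'.le, ← Real.rpow_add h1x']
      congr 1
      push_cast
      ring
    rw [hsplit, mul_assoc, ← mul_pow]
    have hfrac : (1-x')⁻¹ * (x - x') ≤ x := by
      rw [← div_eq_inv_mul, div_le_iff₀ h1x']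
      nlinarith
    have hfrac0 : 0 ≤ (1-x')⁻¹ * (x - x') :=
      mul_nonneg (inv_nonneg.mpr h1x'.le) (by linarith)
    have hp1 : ((1-x')⁻¹ * (x - x'))^M ≤ x^M := pow_le_pow_left₀ hfrac0 hfrac M
    have hp2 : (1-x') ^ (-(3/2 : ℝ)) ≤ 1 / ((1-x) * Real.sqrt (1-x)) := by
      have e1 : (1-x') ^ (-(3/2 : ℝ)) = 1 / ((1-x') * Real.sqrt (1-x')) := by
        rw [Real.rpow_neg h1x'.le, one_div]
        congr 1
        rw [show (3/2 : ℝ) = 1 + 1/2 by norm_num, Real.rpow_add h1x', Real.rpow_one,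
          ← Real.sqrt_eq_rpow]
      rw [e1]
      apply div_le_div_of_nonneg_left (by norm_num) (by positivity)
      have : Real.sqrt (1-x) ≤ Real.sqrt (1-x') := Real.sqrt_le_sqrt (by linarith)
      have hs0 : 0 < Real.sqrt (1-x) := Real.sqrt_pos.mpr h1x
      nlinarith
    calc (1-x') ^ (-(3/2:ℝ)) * ((1-x')⁻¹ * (x-x'))^M
        ≤ (1-x') ^ (-(3/2:ℝ)) * x^M := by
          apply mul_le_mul_of_nonneg_left hp1 (Real.rpow_nonneg h1x'.le _)
      _ ≤ (1 / ((1-x) * Real.sqrt (1-x))) * x^M := by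
          apply mul_le_mul_of_nonneg_right hp2 (pow_nonneg hx0.le M)
  have hRle : R ≤ ((M:ℝ)+1) * aseq (M+1) * x^(M+1) / ((1-x) * Real.sqrt (1-x)) := by
    rw [hR, sub_zero]
    have hdd : dd (M+1) / (M.factorial : ℝ) = ((M:ℝ)+1) * aseq (M+1) := by
      rw [dd_eq, Nat.factorial_succ]
      have : (M.factorial : ℝ) ≠ 0 := Nat.cast_ne_zero.mpr M.factorial_ne_zero
      push_cast
      field_simp
    have h2 : (0:ℝ) < (M.factorial : ℝ) := Nat.cast_pos.mpr M.factorial_pos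
    have step : dd (M+1) * ((1-x') ^ (-(((M:ℝ)+1) + 1/2)) * (x - x') ^ M)
        ≤ dd (M+1) * ((1 / ((1-x) * Real.sqrt (1-x))) * x ^ M) :=
      mul_le_mul_of_nonneg_left hkey (dd_pos (M+1)).le
    calc dd (M+1) * (1-x') ^ (-(((M:ℝ)+1) + 1/2)) * (x - x') ^ M / (M.factorial : ℝ) * x
        = (dd (M+1) * ((1-x') ^ (-(((M:ℝ)+1) + 1/2)) * (x - x') ^ M)) * (x / (M.factorial : ℝ)) := by
          ring
      _ ≤ (dd (M+1) * ((1 / ((1-x) * Real.sqrt (1-x))) * x ^ M)) * (x / (M.factorial : ℝ)) := by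
          apply mul_le_mul_of_nonneg_right step (by positivity)
      _ = (dd (M+1) / (M.factorial : ℝ)) * (x^M * x) / ((1-x) * Real.sqrt (1-x)) := by
          ring
      _ = ((M:ℝ)+1) * aseq (M+1) * x^(M+1) / ((1-x) * Real.sqrt (1-x)) := by
          rw [hdd, ← pow_succ]
  constructor
  · linarith
  · linarith




lemma J0_val : (∫ t in (0:ℝ)..1, 1 / Real.sqrt (1-t^2)) = Real.pi/2 := by
  have := J_val 0
  simp only [Nat.mul_zero, J, pow_zero, aseq] at this
  simpa using this

lemma intK_bounds (c : ℝ) (M : ℕ) (hc0 : 0 < c) (hc1 : c < 1) :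
    Real.pi/2 * (∑ k ∈ Finset.range (M+1), aseq k ^ 2 * c ^ k)
      ≤ (∫ t in (0:ℝ)..1, 1 / Real.sqrt ((1 - t^2) * (1 - c * t^2))) ∧
    (∫ t in (0:ℝ)..1, 1 / Real.sqrt ((1 - t^2) * (1 - c * t^2)))
      ≤ Real.pi/2 * ((∑ k ∈ Finset.range (M+1), aseq k ^ 2 * c ^ k)
        + ((M:ℝ)+1) * aseq (M+1) * c^(M+1) / ((1-c) * Real.sqrt (1-c))) := by
  set E : ℝ := ((M:ℝ)+1) * aseq (M+1) * c^(M+1) / ((1-c) * Real.sqrt (1-c)) with hE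
  set P : ℝ → ℝ := fun t => ∑ k ∈ Finset.range (M+1), aseq k * c^k * (t^(2*k) / Real.sqrt (1-t^2))
    with hP
  set Fc : ℝ → ℝ := fun t => 1 / Real.sqrt ((1-t^2) * (1-c*t^2)) with hFc
  have hE0 : 0 ≤ E := by
    rw [hE]
    have h1 : (0:ℝ) < 1 - c := by linarith
    have := (aseq_pos (M+1)).le
    positivity
  -- integrability of P
  have hPint : IntervalIntegrable P volume 0 1 := by
    have hfun : (∑ k ∈ Finset.range (M+1),
        (fun t : ℝ => aseq k * c^k * (t^(2*k) / Real.sqrt (1-t^2)))) = P := by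
      funext t
      rw [hP, Finset.sum_apply]
    rw [← hfun]
    exact IntervalIntegrable.sum _ (fun k _ => (Jint (2*k)).const_mul (aseq k * c^k))
  -- integrability of Fc
  have hFint : IntervalIntegrable Fc volume 0 1 := by
    have hg : IntervalIntegrable (fun t : ℝ => (1 / Real.sqrt (1-c)) * (1 / Real.sqrt (1-t^2)))
        volume 0 1 := J0int.const_mul _
    apply hg.mono_fun
    · apply Measurable.aestronglyMeasurable
      exact measurable_const.div
        (((measurable_const.sub (measurable_id.pow_const 2)).mul
          (measurable_const.sub (measurable_const.mul (measurable_id.pow_const 2)))).sqrt)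
    · rw [Filter.EventuallyLE, uIoc_of_le (by norm_num : (0:ℝ) ≤ 1)]
      filter_upwards [ae_restrict_mem measurableSet_Ioc] with t ht
      have ht0 : 0 < t := ht.1
      have ht1 : t ≤ 1 := ht.2
      have h1c : (0:ℝ) < 1 - c := by linarith
      have h1t2 : (0:ℝ) ≤ 1 - t^2 := by nlinarith
      have h1ct2 : (0:ℝ) < 1 - c*t^2 := by nlinarith
      have hcle : 1 - c ≤ 1 - c*t^2 := by nlinarith
      rw [Real.norm_eq_abs, Real.norm_eq_abs, abs_of_nonneg (by positivity),
        abs_of_nonneg (by positivity)]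
      simp only [hFc]
      rw [Real.sqrt_mul h1t2]
      have hA : 1/(Real.sqrt (1-t^2) * Real.sqrt (1-c*t^2))
          = (1/Real.sqrt (1-c*t^2)) * (1/Real.sqrt (1-t^2)) := by
        rw [one_div, mul_inv, one_div, one_div]; ring
      rw [hA]
      apply mul_le_mul_of_nonneg_right ?_ (by positivity)
      exact one_div_le_one_div_of_le (Real.sqrt_pos.mpr h1c) (Real.sqrt_le_sqrt hcle)
  -- pointwise bounds on Ioo
  have hpt : ∀ t ∈ Ioo (0:ℝ) 1, P t ≤ Fc t ∧ Fc t ≤ P t + E * (1 / Real.sqrt (1-t^2)) := by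
    intro t ht
    have ht0 : 0 < t := ht.1
    have ht1 : t < 1 := ht.2
    have hu0 : 0 < c * t^2 := by positivity
    have ht2le : t^2 ≤ 1 := by nlinarith
    have hu1 : c * t^2 < 1 := by nlinarith
    have huc : c * t^2 ≤ c := by nlinarith
    have h1t2 : (0:ℝ) < 1 - t^2 := by nlinarith
    have hst : 0 < Real.sqrt (1-t^2) := Real.sqrt_pos.mpr h1t2
    have hstinv : (0:ℝ) ≤ 1 / Real.sqrt (1-t^2) := by positivity
    obtain ⟨hlo, hhi⟩ := taylor_bounds M (c*t^2) hu0 hu1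
    -- Fc t in product form
    have hFeq : Fc t = (1 / Real.sqrt (1 - c*t^2)) * (1 / Real.sqrt (1-t^2)) := by
      simp only [hFc]
      rw [Real.sqrt_mul h1t2.le]
      rw [one_div, mul_inv, ← one_div, ← one_div, mul_comm]
    -- P t in product form
    have hPeq : P t = (∑ k ∈ Finset.range (M+1), aseq k * (c*t^2) ^ k) * (1 / Real.sqrt (1-t^2)) := by
      rw [hP, Finset.sum_mul]
      apply Finset.sum_congr rfl
      intro k _
      rw [mul_pow, pow_mul]
      ring
    constructor
    · rw [hPeq, hFeq]
      exact mul_le_mul_of_nonneg_right hlo hstinv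
    · -- tail estimate
      have h1c : (0:ℝ) < 1 - c := by linarith
      have h1u : (0:ℝ) < 1 - c*t^2 := by linarith
      have hcle2 : 1 - c ≤ 1 - c*t^2 := by nlinarith
      have hnn : (0:ℝ) ≤ ((M:ℝ)+1) * aseq (M+1) * c^(M+1) :=
        mul_nonneg (mul_nonneg (by positivity) (aseq_pos (M+1)).le) (by positivity)
      have hta : ((M:ℝ)+1) * aseq (M+1) * (c*t^2)^(M+1) / ((1-c*t^2) * Real.sqrt (1-c*t^2)) ≤ E := by
         rw [hE]
         apply div_le_div₀ hnn
           (mul_le_mul_of_nonneg_left (pow_le_pow_left₀ hu0.le huc (M+1))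
             (mul_nonneg (by positivity) (aseq_pos (M+1)).le))
           (mul_pos h1c (Real.sqrt_pos.mpr h1c))
           (mul_le_mul hcle2 (Real.sqrt_le_sqrt hcle2) (Real.sqrt_nonneg _) h1u.le)
      rw [hPeq, hFeq]
      calc (1 / Real.sqrt (1 - c*t^2)) * (1 / Real.sqrt (1-t^2))
          ≤ ((∑ k ∈ Finset.range (M+1), aseq k * (c*t^2) ^ k)
              + ((M:ℝ)+1) * aseq (M+1) * (c*t^2)^(M+1) / ((1-c*t^2) * Real.sqrt (1-c*t^2)))
            * (1 / Real.sqrt (1-t^2)) := mul_le_mul_of_nonneg_right hhi hstinv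
        _ ≤ ((∑ k ∈ Finset.range (M+1), aseq k * (c*t^2) ^ k) + E) * (1 / Real.sqrt (1-t^2)) := by
            apply mul_le_mul_of_nonneg_right _ hstinv
            linarith
        _ = (∑ k ∈ Finset.range (M+1), aseq k * (c*t^2) ^ k) * (1 / Real.sqrt (1-t^2))
              + E * (1 / Real.sqrt (1-t^2)) := by ring
  -- a.e. versions
  have hnull : volume ({0,1} : Set ℝ) = 0 :=
    (Set.toFinite _).measure_zero volume
  have hae : ∀ᵐ t ∂(volume.restrict (Icc (0:ℝ) 1)),
      P t ≤ Fc t ∧ Fc t ≤ P t + E * (1 / Real.sqrt (1-t^2)) := by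
    filter_upwards [ae_restrict_mem measurableSet_Icc,
      ae_restrict_of_ae (measure_eq_zero_iff_ae_notMem.mp hnull)] with t hticc htne
    have htIoo : t ∈ Ioo (0:ℝ) 1 := by
      constructor
      · rcases lt_or_eq_of_le hticc.1 with h | h
        · exact h
        · exact absurd (by rw [← h]; left; rfl) htne
      · rcases lt_or_eq_of_le hticc.2 with h | h
        · exact h
        · exact absurd (by rw [h]; right; rfl) htne
    exact hpt t htIoo
  -- integral values
  have hPval : (∫ t in (0:ℝ)..1, P t) = Real.pi/2 * (∑ k ∈ Finset.range (M+1), aseq k ^ 2 * c ^ k) := by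
    rw [hP]
    rw [intervalIntegral.integral_finset_sum (fun k _ => (Jint (2*k)).const_mul (aseq k * c^k))]
    rw [Finset.mul_sum]
    apply Finset.sum_congr rfl
    intro k _
    rw [intervalIntegral.integral_const_mul]
    have : (∫ t in (0:ℝ)..1, t^(2*k) / Real.sqrt (1-t^2)) = J (2*k) := rfl
    rw [this, J_val k]
    ring
  have hψint : IntervalIntegrable (fun t => P t + E * (1 / Real.sqrt (1-t^2))) volume 0 1 :=
    hPint.add (J0int.const_mul E)
  have h1 : (∫ t in (0:ℝ)..1, P t) ≤ ∫ t in (0:ℝ)..1, Fc t :=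
    intervalIntegral.integral_mono_ae_restrict zero_le_one hPint hFint
      (hae.mono (fun t h => h.1))
  have h2 : (∫ t in (0:ℝ)..1, Fc t) ≤ ∫ t in (0:ℝ)..1, (P t + E * (1 / Real.sqrt (1-t^2))) :=
    intervalIntegral.integral_mono_ae_restrict zero_le_one hFint hψint
      (hae.mono (fun t h => h.2))
  have h3 : (∫ t in (0:ℝ)..1, (P t + E * (1 / Real.sqrt (1-t^2))))
      = Real.pi/2 * (∑ k ∈ Finset.range (M+1), aseq k ^ 2 * c ^ k) + E * (Real.pi/2) := by
    rw [intervalIntegral.integral_add hPint (J0int.const_mul E),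
      intervalIntegral.integral_const_mul, hPval, J0_val]
  constructor
  · rw [← hPval]; exact h1
  · have hfin : Real.pi/2 * (∑ k ∈ Finset.range (M+1), aseq k ^ 2 * c ^ k) + E * (Real.pi/2)
        = Real.pi/2 * ((∑ k ∈ Finset.range (M+1), aseq k ^ 2 * c ^ k) + E) := by ring
    exact h2.trans (le_of_eq (h3.trans hfin))



set_option maxHeartbeats 2000000

lemma sum_bounds_c (c : ℝ) (h1 : (267949192431122706472553658494127633/500000000000000000000000000000000000 : ℝ) ≤ c) (h2 : c ≤ (133974596215561353236276829247063817/250000000000000000000000000000000000 : ℝ)) :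
    (240100526037260597283937368800114451223752241/200000000000000000000000000000000000000000000 : ℝ) ≤ (∑ k ∈ Finset.range 70, aseq k^2 * c^k) ∧
    (∑ k ∈ Finset.range 70, aseq k^2 * c^k) ≤ (1200502630186302986419686844000572257288957113/1000000000000000000000000000000000000000000000 : ℝ) := by
  have hc0 : (0:ℝ) ≤ c := le_trans (by norm_num) h1
  constructor
  · calc (240100526037260597283937368800114451223752241/200000000000000000000000000000000000000000000 : ℝ) ≤ ∑ k ∈ Finset.range 70, aseq k^2 * (267949192431122706472553658494127633/500000000000000000000000000000000000 : ℝ)^k := by norm_num [Finset.sum_range_succ, aseq, Finset.prod_range_succ]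
      _ ≤ ∑ k ∈ Finset.range 70, aseq k^2 * c^k :=
        Finset.sum_le_sum fun i _ => mul_le_mul_of_nonneg_left
          (pow_le_pow_left₀ (by norm_num) h1 i) (sq_nonneg _)
  · calc (∑ k ∈ Finset.range 70, aseq k^2 * c^k)
        ≤ ∑ k ∈ Finset.range 70, aseq k^2 * (133974596215561353236276829247063817/250000000000000000000000000000000000 : ℝ)^k :=
        Finset.sum_le_sum fun i _ => mul_le_mul_of_nonneg_left
          (pow_le_pow_left₀ hc0 h2 i) (sq_nonneg _)
      _ ≤ (1200502630186302986419686844000572257288957113/1000000000000000000000000000000000000000000000 : ℝ) := by norm_num [Finset.sum_range_succ, aseq, Finset.prod_range_succ]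

lemma sum_bounds_p (c : ℝ) (h1 : (116025403784438646763723170752936183/250000000000000000000000000000000000 : ℝ) ≤ c) (h2 : c ≤ (232050807568877293527446341505872367/500000000000000000000000000000000000 : ℝ)) :
    (290425940953251327177751108525899390848497947/250000000000000000000000000000000000000000000 : ℝ) ≤ (∑ k ∈ Finset.range 70, aseq k^2 * c^k) ∧
    (∑ k ∈ Finset.range 70, aseq k^2 * c^k) ≤ (580851881906502654355502217051798782196891777/500000000000000000000000000000000000000000000 : ℝ) := by
  have hc0 : (0:ℝ) ≤ c := le_trans (by norm_num) h1
  constructor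
  · calc (290425940953251327177751108525899390848497947/250000000000000000000000000000000000000000000 : ℝ) ≤ ∑ k ∈ Finset.range 70, aseq k^2 * (116025403784438646763723170752936183/250000000000000000000000000000000000 : ℝ)^k := by norm_num [Finset.sum_range_succ, aseq, Finset.prod_range_succ]
      _ ≤ ∑ k ∈ Finset.range 70, aseq k^2 * c^k :=
        Finset.sum_le_sum fun i _ => mul_le_mul_of_nonneg_left
          (pow_le_pow_left₀ (by norm_num) h1 i) (sq_nonneg _)
  · calc (∑ k ∈ Finset.range 70, aseq k^2 * c^k)
        ≤ ∑ k ∈ Finset.range 70, aseq k^2 * (232050807568877293527446341505872367/500000000000000000000000000000000000 : ℝ)^k :=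
        Finset.sum_le_sum fun i _ => mul_le_mul_of_nonneg_left
          (pow_le_pow_left₀ hc0 h2 i) (sq_nonneg _)
      _ ≤ (580851881906502654355502217051798782196891777/500000000000000000000000000000000000000000000 : ℝ) := by norm_num [Finset.sum_range_succ, aseq, Finset.prod_range_succ]

lemma aseq70 : aseq 70 = (11727621212230005150598236822563287208325/174224571863520493293247799005065324265472 : ℝ) := by
  norm_num [aseq, Finset.prod_range_succ]

lemma ebound_generic (c : ℝ) (clo chi r p70 ehi : ℝ)
    (h1 : clo ≤ c) (h2 : c ≤ chi) (hclo : 0 < clo) (hchi : chi < 1)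
    (hr : 0 < r) (hr2 : r^2 ≤ 1 - chi) (hp70 : chi^70 ≤ p70)
    (hkey : (((69:ℕ):ℝ)+1) * aseq 70 * p70 / ((1-chi) * r) ≤ ehi) :
    (((69:ℕ):ℝ)+1) * aseq (69+1) * c^(69+1) / ((1-c) * Real.sqrt (1-c)) ≤ ehi := by
  have hc0 : 0 < c := lt_of_lt_of_le hclo h1
  have h1c : 0 < 1 - c := by linarith
  have h1chi : 0 < 1 - chi := by linarith
  have hsq : r ≤ Real.sqrt (1-c) := by
    rw [Real.le_sqrt hr.le h1c.le]
    nlinarith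
  have hnum_nonneg : (0:ℝ) ≤ (((69:ℕ):ℝ)+1) * aseq 70 * p70 := by
    apply mul_nonneg (mul_nonneg (by norm_num) (aseq_pos 70).le)
    nlinarith [pow_nonneg (le_trans hclo.le (le_trans h1 h2)) 70]
  have hnum_le : (((69:ℕ):ℝ)+1) * aseq (69+1) * c^(69+1) ≤ (((69:ℕ):ℝ)+1) * aseq 70 * p70 := by
    show (((69:ℕ):ℝ)+1) * aseq 70 * c^70 ≤ _
    apply mul_le_mul_of_nonneg_left _ (mul_nonneg (by norm_num) (aseq_pos 70).le)
    calc c^70 ≤ chi^70 := pow_le_pow_left₀ hc0.le h2 70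
      _ ≤ p70 := hp70
  refine le_trans ?_ hkey
  apply div_le_div₀ hnum_nonneg hnum_le (mul_pos h1chi hr)
  exact mul_le_mul (by linarith) hsq hr.le h1c.le

/-- The extremal length of a diagonal curve on the cube punctured at its vertices:
with `a = (1+√3)/√2` and `t = 2a⁴/(1+a⁴)`, one has `t > 1` and `4 (K/K')(1/√t)`
lies within `2.81 × 10⁻¹⁴` of `4.1335929781133`. -/
theorem diagonal_curve_extremal_length :
    let a : ℝ := (1 + Real.sqrt 3) / Real.sqrt 2
    let t : ℝ := 2 * a ^ 4 / (1 + a ^ 4)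
    t > 1 ∧
    |4 * ellK (1 / Real.sqrt t) / ellK' (1 / Real.sqrt t) - 4.1335929781133| ≤ 2.81e-14 := by
  intro a t
  have h3 : Real.sqrt 3 ^ 2 = 3 := Real.sq_sqrt (by norm_num)
  have h2 : Real.sqrt 2 ^ 2 = 2 := Real.sq_sqrt (by norm_num)
  have hs2pos : 0 < Real.sqrt 2 := Real.sqrt_pos.mpr (by norm_num)
  have hs3nn : 0 ≤ Real.sqrt 3 := Real.sqrt_nonneg 3
  have hs3l : (866025403784438646763723170752936183/500000000000000000000000000000000000 : ℝ) ≤ Real.sqrt 3 :=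
    (Real.le_sqrt (by norm_num) (by norm_num)).mpr (by norm_num)
  have hs3u : Real.sqrt 3 ≤ (1732050807568877293527446341505872367/1000000000000000000000000000000000000 : ℝ) := by
    calc Real.sqrt 3 ≤ Real.sqrt ((1732050807568877293527446341505872367/1000000000000000000000000000000000000 : ℝ)^2) := Real.sqrt_le_sqrt (by norm_num)
      _ = (1732050807568877293527446341505872367/1000000000000000000000000000000000000 : ℝ) := Real.sqrt_sq (by norm_num)
  have ha4 : a^4 = 7 + 4*Real.sqrt 3 := by
    show ((1 + Real.sqrt 3) / Real.sqrt 2)^4 = _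
    rw [div_pow]
    rw [show (Real.sqrt 2)^4 = ((Real.sqrt 2)^2)^2 by ring, h2]
    rw [show (1 + Real.sqrt 3)^4 = 28 + 16*Real.sqrt 3 from by
      linear_combination (Real.sqrt 3^2 + 4*Real.sqrt 3 + 9) * h3]
    norm_num
    ring
  have ht : t = 1 + Real.sqrt 3 / 2 := by
    show 2*a^4/(1+a^4) = _
    rw [ha4]
    have hden : (1:ℝ) + (7 + 4*Real.sqrt 3) ≠ 0 := by nlinarith
    field_simp
    linear_combination -4 * h3
  have ht1 : t > 1 := by
    rw [ht]
    have : (3/2 : ℝ) ≤ Real.sqrt 3 := by linarith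
    linarith
  refine ⟨ht1, ?_⟩
  have ht_pos : (0:ℝ) < t := by linarith
  have hk2 : (1 / Real.sqrt t)^2 = 4 - 2*Real.sqrt 3 := by
    rw [div_pow, one_pow, Real.sq_sqrt ht_pos.le, ht]
    have hden : (1:ℝ) + Real.sqrt 3 / 2 ≠ 0 := by nlinarith
    field_simp
    linear_combination 2 * h3
  have hk2' : 1 - (1 / Real.sqrt t)^2 = 2*Real.sqrt 3 - 3 := by rw [hk2]; ring
  have hkp : (Real.sqrt (1 - (1 / Real.sqrt t)^2))^2 = 2*Real.sqrt 3 - 3 := by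
    rw [hk2']
    exact Real.sq_sqrt (by linarith)
  have hc0 : (0:ℝ) < 4 - 2*Real.sqrt 3 := by linarith
  have hc1 : 4 - 2*Real.sqrt 3 < 1 := by linarith
  have hp0 : (0:ℝ) < 2*Real.sqrt 3 - 3 := by linarith
  have hp1 : 2*Real.sqrt 3 - 3 < 1 := by linarith
  have he1 : ellK (1 / Real.sqrt t)
      = ∫ s in (0:ℝ)..1, 1 / Real.sqrt ((1 - s^2) * (1 - (4 - 2*Real.sqrt 3) * s^2)) := by
    unfold ellK
    simp only [hk2]
  have he2 : ellK' (1 / Real.sqrt t)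
      = ∫ s in (0:ℝ)..1, 1 / Real.sqrt ((1 - s^2) * (1 - (2*Real.sqrt 3 - 3) * s^2)) := by
    unfold ellK' ellK
    simp only [hkp]
  obtain ⟨hKa, hKb⟩ := intK_bounds (4 - 2*Real.sqrt 3) 69 hc0 hc1
  obtain ⟨hKa', hKb'⟩ := intK_bounds (2*Real.sqrt 3 - 3) 69 hp0 hp1
  have hScl : (267949192431122706472553658494127633/500000000000000000000000000000000000 : ℝ) ≤ 4 - 2*Real.sqrt 3 := by linarith
  have hSch : 4 - 2*Real.sqrt 3 ≤ (133974596215561353236276829247063817/250000000000000000000000000000000000 : ℝ) := by linarith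
  have hSpl : (116025403784438646763723170752936183/250000000000000000000000000000000000 : ℝ) ≤ 2*Real.sqrt 3 - 3 := by linarith
  have hSph : 2*Real.sqrt 3 - 3 ≤ (232050807568877293527446341505872367/500000000000000000000000000000000000 : ℝ) := by linarith
  obtain ⟨hS1, hS2⟩ := sum_bounds_c _ hScl hSch
  obtain ⟨hS1', hS2'⟩ := sum_bounds_p _ hSpl hSph
  have hE : (((69:ℕ):ℝ)+1) * aseq (69+1) * (4 - 2*Real.sqrt 3)^(69+1)
      / ((1-(4 - 2*Real.sqrt 3)) * Real.sqrt (1-(4 - 2*Real.sqrt 3))) ≤ (323653501197469047113071617/200000000000000000000000000000000000000000000 : ℝ) :=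
    ebound_generic _ (267949192431122706472553658494127633/500000000000000000000000000000000000 : ℝ) (133974596215561353236276829247063817/250000000000000000000000000000000000 : ℝ) (851562548291516600485985610094577220713/1250000000000000000000000000000000000000 : ℝ) (108585383405706198162269126078660375043751/1000000000000000000000000000000000000000000000000000000000000 : ℝ) (323653501197469047113071617/200000000000000000000000000000000000000000000 : ℝ)
      hScl hSch (by norm_num) (by norm_num) (by norm_num) (by norm_num) (by norm_num)
      (by rw [aseq70]; norm_num)
  have hE' : (((69:ℕ):ℝ)+1) * aseq (69+1) * (2*Real.sqrt 3 - 3)^(69+1)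
      / ((1-(2*Real.sqrt 3 - 3)) * Real.sqrt (1-(2*Real.sqrt 3 - 3))) ≤ (13817532308169916678417/250000000000000000000000000000000000000000000 : ℝ) :=
    ebound_generic _ (116025403784438646763723170752936183/250000000000000000000000000000000000 : ℝ) (232050807568877293527446341505872367/500000000000000000000000000000000000 : ℝ) (3660254037844386467637231707529361834323/5000000000000000000000000000000000000000 : ℝ) (1150417809939535461410957304115061873/250000000000000000000000000000000000000000000000000000000000 : ℝ) (13817532308169916678417/250000000000000000000000000000000000000000000 : ℝ)
      hSpl hSph (by norm_num) (by norm_num) (by norm_num) (by norm_num) (by norm_num)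
      (by rw [aseq70]; norm_num)
  have hpi : (0:ℝ) < Real.pi/2 := by positivity
  -- K bounds
  have hKlo : Real.pi/2 * (240100526037260597283937368800114451223752241/200000000000000000000000000000000000000000000 : ℝ) ≤ ellK (1 / Real.sqrt t) := by
    rw [he1]
    refine le_trans ?_ hKa
    apply mul_le_mul_of_nonneg_left (le_trans (by norm_num) hS1) hpi.le
  have hKhi : ellK (1 / Real.sqrt t) ≤ Real.pi/2 * (600251315093151494018977174993958746427157599/500000000000000000000000000000000000000000000 : ℝ) := by
    rw [he1]
    refine hKb.trans ?_
    apply mul_le_mul_of_nonneg_left ?_ hpi.le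
    have := add_le_add hS2 hE
    refine le_trans this ?_
    norm_num
  have hKlo' : Real.pi/2 * (290425940953251327177751108525899390848497947/250000000000000000000000000000000000000000000 : ℝ) ≤ ellK' (1 / Real.sqrt t) := by
    rw [he2]
    refine le_trans ?_ hKa'
    apply mul_le_mul_of_nonneg_left (le_trans (by norm_num) hS1') hpi.le
  have hKhi' : ellK' (1 / Real.sqrt t) ≤ Real.pi/2 * (580851881906502654355529852116415122030248611/500000000000000000000000000000000000000000000 : ℝ) := by
    rw [he2]
    refine hKb'.trans ?_
    apply mul_le_mul_of_nonneg_left ?_ hpi.le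
    have := add_le_add hS2' hE'
    refine le_trans this ?_
    norm_num
  have hK'pos : 0 < ellK' (1 / Real.sqrt t) :=
    lt_of_lt_of_le (by positivity) hKlo'
  have hKnonneg : 0 ≤ ellK (1 / Real.sqrt t) :=
    le_trans (by positivity) hKlo
  have hlow : (4*(Real.pi/2 * (240100526037260597283937368800114451223752241/200000000000000000000000000000000000000000000 : ℝ)))/(Real.pi/2 * (580851881906502654355529852116415122030248611/500000000000000000000000000000000000000000000 : ℝ))
      ≤ 4 * ellK (1 / Real.sqrt t) / ellK' (1 / Real.sqrt t) :=
    div_le_div₀ (by linarith) (by linarith) hK'pos hKhi'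
  have hhigh : 4 * ellK (1 / Real.sqrt t) / ellK' (1 / Real.sqrt t)
      ≤ (4*(Real.pi/2 * (600251315093151494018977174993958746427157599/500000000000000000000000000000000000000000000 : ℝ)))/(Real.pi/2 * (290425940953251327177751108525899390848497947/250000000000000000000000000000000000000000000 : ℝ)) :=
    div_le_div₀ (by positivity) (by linarith) (by positivity) hKlo'
  have hcl : (4*(Real.pi/2 * (240100526037260597283937368800114451223752241/200000000000000000000000000000000000000000000 : ℝ)))/(Real.pi/2 * (580851881906502654355529852116415122030248611/500000000000000000000000000000000000000000000 : ℝ)) = (4*(240100526037260597283937368800114451223752241/200000000000000000000000000000000000000000000 : ℝ))/(580851881906502654355529852116415122030248611/500000000000000000000000000000000000000000000 : ℝ) := by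
    rw [show (4*(Real.pi/2 * (240100526037260597283937368800114451223752241/200000000000000000000000000000000000000000000 : ℝ))) = (Real.pi/2) * (4*(240100526037260597283937368800114451223752241/200000000000000000000000000000000000000000000 : ℝ)) by ring]
    exact mul_div_mul_left _ _ (ne_of_gt hpi)
  have hch : (4*(Real.pi/2 * (600251315093151494018977174993958746427157599/500000000000000000000000000000000000000000000 : ℝ)))/(Real.pi/2 * (290425940953251327177751108525899390848497947/250000000000000000000000000000000000000000000 : ℝ)) = (4*(600251315093151494018977174993958746427157599/500000000000000000000000000000000000000000000 : ℝ))/(290425940953251327177751108525899390848497947/250000000000000000000000000000000000000000000 : ℝ) := by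
    rw [show (4*(Real.pi/2 * (600251315093151494018977174993958746427157599/500000000000000000000000000000000000000000000 : ℝ))) = (Real.pi/2) * (4*(600251315093151494018977174993958746427157599/500000000000000000000000000000000000000000000 : ℝ)) by ring]
    exact mul_div_mul_left _ _ (ne_of_gt hpi)
  rw [hcl] at hlow
  rw [hch] at hhigh
  rw [abs_le]
  constructor
  · have : (4.1335929781133 - 2.81e-14 : ℝ) ≤ (4*(240100526037260597283937368800114451223752241/200000000000000000000000000000000000000000000 : ℝ))/(580851881906502654355529852116415122030248611/500000000000000000000000000000000000000000000 : ℝ) := by norm_num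
    linarith
  · have : (4*(600251315093151494018977174993958746427157599/500000000000000000000000000000000000000000000 : ℝ))/(290425940953251327177751108525899390848497947/250000000000000000000000000000000000000000000 : ℝ) ≤ (4.1335929781133 + 2.81e-14 : ℝ) := by norm_num
    linarith
end

section
/- Let K(k) = ∫₀¹ dt/√((1-t²)(1-k²t²)) for k ∈ (0,1) and K'(k) = K(√(1-k²)). Then |6·K(1/3)/K'(1/3) - 3.83778471351302| ≤ 9.40×10⁻¹⁵. -/
open intervalIntegral

open Set MeasureTheory intervalIntegral Real Filter
private lemma subst_limit {f g φ dφ : ℝ → ℝ} {b : ℝ} (hb : 0 < b)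
    (hf : IntervalIntegrable f volume 0 1)
    (hg : IntervalIntegrable g volume 0 b)
    (hφ : ∀ x, HasDerivAt φ (dφ x) x)
    (hdφ : Continuous dφ)
    (hφ0 : φ 0 = 0) (hφb : Tendsto φ (nhdsWithin b (Iio b)) (nhds 1))
    (hmaps : ∀ x, 0 ≤ x → x < b → φ x ∈ Ico (0:ℝ) 1)
    (hfc : ContinuousOn f (Ico 0 1))
    (heq : ∀ x, 0 ≤ x → x < b → dφ x * f (φ x) = g x) :
    ∫ x in (0:ℝ)..1, f x = ∫ x in (0:ℝ)..b, g x := by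
  set F : ℝ → ℝ := fun y => ∫ t in (0:ℝ)..y, f t with hF
  set G : ℝ → ℝ := fun c => ∫ x in (0:ℝ)..c, g x with hG
  have hFc : ContinuousOn F (Icc 0 1) := by
    have := continuousOn_primitive_interval' hf (a := 0) left_mem_uIcc
    rwa [uIcc_of_le (by norm_num : (0:ℝ) ≤ 1)] at this
  have hGc : ContinuousOn G (Icc 0 b) := by
    have := continuousOn_primitive_interval' hg (a := 0) left_mem_uIcc
    rwa [uIcc_of_le hb.le] at this
  have key : ∀ c ∈ Ico (0:ℝ) b, F (φ c) = G c := by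
    intro c hc
    have hsub : uIcc (0:ℝ) c ⊆ Ico 0 b := by
      rw [uIcc_of_le hc.1]
      exact fun x hx => ⟨hx.1, lt_of_le_of_lt hx.2 hc.2⟩
    have h1 : (∫ x in (0:ℝ)..c, dφ x • f (φ x)) = ∫ u in (φ 0)..(φ c), f u := by
      apply integral_comp_smul_deriv' (fun x _ => hφ x) hdφ.continuousOn
      apply hfc.mono
      rintro y ⟨x, hx, rfl⟩
      exact hmaps x (hsub hx).1 (hsub hx).2
    have h2 : (∫ x in (0:ℝ)..c, dφ x • f (φ x)) = G c := by
      apply integral_congr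
      intro x hx
      have := heq x (hsub hx).1 (hsub hx).2
      simpa [smul_eq_mul] using this
    rw [hφ0] at h1
    rw [← h2, h1]
  have hne : (nhdsWithin b (Iio b)).NeBot := nhdsLT_neBot b
  have hev : ∀ᶠ c in nhdsWithin b (Iio b), c ∈ Ico (0:ℝ) b := by
    filter_upwards [Ioo_mem_nhdsLT_of_mem (show b ∈ Ioc (0:ℝ) b from ⟨hb, le_refl b⟩)]
      with c hc
    exact ⟨hc.1.le, hc.2⟩
  have T1 : Tendsto (fun c => F (φ c)) (nhdsWithin b (Iio b)) (nhds (F 1)) := by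
    have hφb' : Tendsto φ (nhdsWithin b (Iio b)) (nhdsWithin 1 (Icc 0 1)) := by
      apply tendsto_nhdsWithin_of_tendsto_nhds_of_eventually_within _ hφb
      filter_upwards [hev] with c hc
      exact Ico_subset_Icc_self (hmaps c hc.1 hc.2)
    exact ((hFc 1 (by norm_num)).tendsto).comp hφb'
  have T2 : Tendsto G (nhdsWithin b (Iio b)) (nhds (G b)) := by
    have hid : Tendsto (fun c : ℝ => c) (nhdsWithin b (Iio b)) (nhdsWithin b (Icc 0 b)) := by
      apply tendsto_nhdsWithin_of_tendsto_nhds_of_eventually_within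
      · exact tendsto_id.mono_left nhdsWithin_le_nhds
      · filter_upwards [hev] with c hc; exact Ico_subset_Icc_self hc
    exact ((hGc b ⟨hb.le, le_refl b⟩).tendsto).comp hid
  have T1' : Tendsto G (nhdsWithin b (Iio b)) (nhds (F 1)) := by
    apply T1.congr'
    filter_upwards [hev] with c hc
    exact key c hc
  exact tendsto_nhds_unique T1' T2

private lemma ellK_integrable' {q : ℝ} (hq0 : 0 ≤ q) (hq : q < 1) :
    IntervalIntegrable (fun t => 1 / Real.sqrt ((1 - t^2) * (1 - q*t^2))) volume 0 1 := by
  have hg : IntervalIntegrable (fun t : ℝ => (1 - q).sqrt⁻¹ * ((1-t) ^ (-(1/2) : ℝ)))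
      volume 0 1 := by
    have h0 : IntervalIntegrable (fun t : ℝ => t ^ (-(1/2) : ℝ)) volume 0 1 :=
      intervalIntegrable_rpow' (by norm_num)
    have h1 := (h0.comp_sub_left 1)
    norm_num at h1
    exact (h1.const_mul _).symm
  rw [intervalIntegrable_iff_integrableOn_Ioc_of_le (by norm_num : (0:ℝ) ≤ 1)] at hg ⊢
  apply Integrable.mono' hg
  · apply Measurable.aestronglyMeasurable
    apply Measurable.div measurable_const
    exact (continuous_sqrt.comp (by continuity)).measurable
  · rw [ae_restrict_iff' measurableSet_Ioc]
    apply ae_of_all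
    intro t ht
    have ht0 : 0 < t := ht.1
    have ht1 : t ≤ 1 := ht.2
    have hkk : 0 < 1 - q := by linarith
    have h1t : 0 ≤ 1 - t := by linarith
    have harg : (1-t) * (1 - q) ≤ (1 - t^2) * (1 - q*t^2) := by
      have h2 : 1 - t ≤ 1 - t^2 := by nlinarith
      have h3 : 1 - q ≤ 1 - q*t^2 := by nlinarith [sq_nonneg t]
      have := mul_le_mul h2 h3 hkk.le (by nlinarith)
      linarith
    have hb : Real.sqrt ((1-t) * (1-q)) ≤ Real.sqrt ((1 - t^2) * (1 - q*t^2)) :=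
      Real.sqrt_le_sqrt harg
    rw [Real.norm_eq_abs, abs_of_nonneg (by positivity), one_div]
    have hRHS : (√(1 - q))⁻¹ * (1 - t) ^ (-(1/2) : ℝ)
        = (Real.sqrt ((1-t) * (1-q)))⁻¹ := by
      rw [Real.sqrt_mul h1t, Real.rpow_neg h1t, ← Real.sqrt_eq_rpow, mul_inv]
      ring
    rw [hRHS]
    rcases eq_or_lt_of_le ht1 with h | h
    · have h2 : (1 - t^2) * (1 - q*t^2) = 0 := by rw [h]; ring
      rw [h2, Real.sqrt_zero, inv_zero]
      positivity
    · have hpos : 0 < (1-t)*(1-q) := by nlinarith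
      exact inv_anti₀ (Real.sqrt_pos.mpr hpos) hb

private lemma ellK_cont {q : ℝ} (hq : q < 1) :
    ContinuousOn (fun t => 1 / Real.sqrt ((1 - t^2) * (1 - q*t^2))) (Ico 0 1) := by
  apply ContinuousOn.div continuousOn_const
  · exact (Real.continuous_sqrt.comp (by continuity)).continuousOn
  · intro x hx
    apply ne_of_gt (Real.sqrt_pos.mpr _)
    have h1 : x^2 < 1 := by nlinarith [hx.1, hx.2]
    have h2 : q * x^2 < 1 := by nlinarith [sq_nonneg x, hx.1]
    nlinarith

private lemma ellK_eq_sin {k q : ℝ} (hq0 : 0 ≤ q) (hq : q < 1) (hkq : k^2 = q) :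
    ellK k = ∫ θ in (0:ℝ)..(π/2), 1 / Real.sqrt (1 - q * sin θ^2) := by
  have hqs : ∀ θ : ℝ, 0 < 1 - q * sin θ^2 := by
    intro θ
    nlinarith [sin_sq_le_one θ, sq_nonneg (sin θ)]
  have hgcont : Continuous (fun θ : ℝ => 1 / Real.sqrt (1 - q * sin θ^2)) := by
    apply continuous_const.div
    · exact continuous_sqrt.comp (by continuity)
    · exact fun θ => ne_of_gt (Real.sqrt_pos.mpr (hqs θ))
  have h := subst_limit (f := fun t => 1 / Real.sqrt ((1 - t^2) * (1 - q*t^2)))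
    (g := fun θ => 1 / Real.sqrt (1 - q * sin θ^2)) (φ := sin) (dφ := cos)
    (b := π/2) (by positivity)
    (ellK_integrable' hq0 hq)
    (hgcont.intervalIntegrable _ _)
    (fun x => hasDerivAt_sin x) continuous_cos (by simp)
    ?_ ?_ (ellK_cont hq) ?_
  · simp only [ellK, hkq]
    exact h
  · have : Tendsto sin (nhdsWithin (π/2) (Iio (π/2))) (nhds (sin (π/2))) :=
      (continuous_sin.tendsto _).mono_left nhdsWithin_le_nhds
    simpa using this
  · intro x hx0 hxb
    constructor
    · exact sin_nonneg_of_nonneg_of_le_pi hx0 (by linarith [pi_pos])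
    · calc sin x < sin (π/2) := by
            apply strictMonoOn_sin ⟨by linarith [pi_pos], by linarith⟩
              ⟨by linarith [pi_pos], le_refl _⟩ hxb
        _ = 1 := sin_pi_div_two
  · intro x hx0 hxb
    have hcos : 0 < cos x := cos_pos_of_mem_Ioo ⟨by linarith [pi_pos], hxb⟩
    have hY : 0 < 1 - q * sin x^2 := hqs x
    have hid : (1 - sin x^2) * (1 - q * sin x^2) = cos x^2 * (1 - q * sin x^2) := by
      have := sin_sq_add_cos_sq x
      nlinarith []
    rw [hid, Real.sqrt_mul (by positivity), Real.sqrt_sq hcos.le]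
    rw [one_div, mul_inv]
    rw [← mul_assoc, mul_inv_cancel₀ (ne_of_gt hcos)]
    simp [one_div]

set_option maxHeartbeats 2000000 in
private lemma landen : ellK (Real.sqrt (8/9)) = 3/2 * ellK (1/2) := by
  have h89 : ((8:ℝ)/9) < 1 := by norm_num
  have h := subst_limit
    (f := fun t => 1 / Real.sqrt ((1 - t^2) * (1 - (8/9)*t^2)))
    (g := fun t => (3:ℝ)/2 * (1 / Real.sqrt ((1 - t^2) * (1 - (1/4)*t^2))))
    (φ := fun t => 3*t/(2+t^2)) (dφ := fun x => (6-3*x^2)/(2+x^2)^2)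
    (b := 1) one_pos
    (ellK_integrable' (by norm_num) h89)
    ((ellK_integrable' (by norm_num) (by norm_num : (1:ℝ)/4 < 1)).const_mul (3/2))
    ?_ ?_ (by norm_num) ?_ ?_ (ellK_cont h89) ?_
  · have e1 : ellK (Real.sqrt (8/9)) =
        ∫ t in (0:ℝ)..1, 1 / Real.sqrt ((1 - t^2) * (1 - (8/9)*t^2)) := by
      simp only [ellK, Real.sq_sqrt (by norm_num : (0:ℝ) ≤ 8/9)]
    have e2 : ellK ((1:ℝ)/2) =
        ∫ t in (0:ℝ)..1, 1 / Real.sqrt ((1 - t^2) * (1 - (1/4)*t^2)) := by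
      simp only [ellK]
      norm_num
    rw [e1, e2, h, intervalIntegral.integral_const_mul]
  · intro x
    have hne : (2 + x^2) ≠ 0 := by positivity
    have h1 : HasDerivAt (fun t : ℝ => 3*t) 3 x := by
      simpa using (hasDerivAt_id x).const_mul 3
    have h2 : HasDerivAt (fun t : ℝ => 2 + t^2) (2*x) x := by
      simpa using ((hasDerivAt_pow 2 x).const_add 2)
    exact (h1.div h2 hne).congr_deriv (by ring)
  · apply Continuous.div (by continuity) (by continuity)
    intro x; positivity
  · have hc : Continuous (fun t : ℝ => 3*t/(2+t^2)) := by
      apply Continuous.div (by continuity) (by continuity)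
      intro x; positivity
    have := (hc.tendsto 1).mono_left (nhdsWithin_le_nhds (s := Iio (1:ℝ)))
    norm_num at this
    exact this
  · intro x hx0 hx1
    refine ⟨by positivity, ?_⟩
    rw [div_lt_one (by positivity)]
    nlinarith
  · intro x hx0 hx1
    set d : ℝ := 2*(2-x^2)/(2+x^2)^2 with hd
    have hne : (2 + x^2) ≠ 0 := by positivity
    have hd0 : 0 < d := by
      apply div_pos (by nlinarith) (by positivity)
    have hx2 : x^2 < 1 := by nlinarith
    have hY : 0 < (1-x^2)*(1-(1/4)*x^2) := by nlinarith
    have hA : (1 - (3*x/(2+x^2))^2) * (1 - (8/9)*(3*x/(2+x^2))^2)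
        = ((1-x^2)*(1-(1/4)*x^2)) * d^2 := by
      rw [hd]
      field_simp
      ring
    rw [hA, Real.sqrt_mul hY.le, Real.sqrt_sq hd0.le]
    have hsY : 0 < Real.sqrt ((1-x^2)*(1-(1/4)*x^2)) := Real.sqrt_pos.mpr hY
    have hdφ : (6-3*x^2)/(2+x^2)^2 = (3/2) * d := by
      rw [hd]; field_simp; ring
    rw [hdφ]
    have cancel : ∀ a c : ℝ, c ≠ 0 → (3/2*c) * (1/(a*c)) = 3/2 * (1/a) := by
      intro a c hc
      rcases eq_or_ne a 0 with rfl | ha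
      · simp
      · field_simp
    exact cancel _ _ (ne_of_gt hd0)

noncomputable def W : ℕ → ℝ
  | 0 => 1
  | (n+1) => W n * (2*n+1) / (2*n+2)

lemma integral_sin_even (n : ℕ) :
    ∫ x in (0:ℝ)..(π/2), sin x ^ (2*n) = (π/2) * W n := by
  induction n with
  | zero => simp [W]
  | succ n ih =>
    have h := integral_sin_pow (a := 0) (b := π/2) (2*n)
    have h2 : 2*(n+1) = 2*n + 2 := by ring
    rw [h2, h, ih]
    simp [W]
    ring

private lemma sqrt_bound {u L ε : ℝ} (hu : 0 < u) (hL : 1 ≤ L) (hε : 0 ≤ ε)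
    (h1 : u * L^2 ≤ 1) (h2 : 1 ≤ u * (L+ε)^2) :
    L ≤ 1/Real.sqrt u ∧ 1/Real.sqrt u ≤ L + ε := by
  have hs : 0 < Real.sqrt u := Real.sqrt_pos.mpr hu
  have hsq : Real.sqrt u ^ 2 = u := Real.sq_sqrt hu.le
  constructor
  · rw [le_div_iff₀ hs]
    nlinarith [mul_pos (mul_pos hs hs) hs, hs.le, mul_nonneg (mul_nonneg hs.le hs.le) hs.le]
  · rw [div_le_iff₀ hs]
    have ht : 0 ≤ (L+ε) * Real.sqrt u := mul_nonneg (by linarith) hs.le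
    nlinarith [ht, hsq, hs.le]

noncomputable def LB1 : ℝ → ℝ := fun y => (1:ℝ) + (1/18:ℝ)*y + (1/216:ℝ)*y^2 + (5/11664:ℝ)*y^3 + (35/839808:ℝ)*y^4 + (7/1679616:ℝ)*y^5 + (77/181398528:ℝ)*y^6 + (143/3265173504:ℝ)*y^7 + (715/156728328192:ℝ)*y^8 + (12155/25389989167104:ℝ)*y^9 + (46189/914039610015744:ℝ)*y^10 + (29393/5484237660094464:ℝ)*y^11 + (676039/1184595334580404224:ℝ)*y^12 + (1300075/21322716022447276032:ℝ)*y^13 + (185725/28430288029929701376:ℝ)*y^14 + (1077205/1535235553616203874304:ℝ)*y^15 + (33393355/442147839441466715799552:ℝ)*y^16 + (21607465/2652887036648800294797312:ℝ)*y^17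
noncomputable def CL1 : List ℝ := [(1:ℝ), (1/18:ℝ), (1/216:ℝ), (5/11664:ℝ), (35/839808:ℝ), (7/1679616:ℝ), (77/181398528:ℝ), (143/3265173504:ℝ), (715/156728328192:ℝ), (12155/25389989167104:ℝ), (46189/914039610015744:ℝ), (29393/5484237660094464:ℝ), (676039/1184595334580404224:ℝ), (1300075/21322716022447276032:ℝ), (185725/28430288029929701376:ℝ), (1077205/1535235553616203874304:ℝ), (33393355/442147839441466715799552:ℝ), (21607465/2652887036648800294797312:ℝ)]

set_option maxHeartbeats 10000000 in
lemma key1 (y : ℝ) (h0 : 0 ≤ y) (h1 : y ≤ 1) :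
    LB1 y ≤ 1 / Real.sqrt (1 - (1/9:ℝ)*y) ∧
    1 / Real.sqrt (1 - (1/9:ℝ)*y) ≤ LB1 y + (1/266834907194665104:ℝ) := by
  have hu : 0 < 1 - (1/9:ℝ)*y := by nlinarith
  have hL : 1 ≤ LB1 y := by
    have hrest : 0 ≤ (1/18:ℝ)*y + (1/216:ℝ)*y^2 + (5/11664:ℝ)*y^3 + (35/839808:ℝ)*y^4 + (7/1679616:ℝ)*y^5 + (77/181398528:ℝ)*y^6 + (143/3265173504:ℝ)*y^7 + (715/156728328192:ℝ)*y^8 + (12155/25389989167104:ℝ)*y^9 + (46189/914039610015744:ℝ)*y^10 + (29393/5484237660094464:ℝ)*y^11 + (676039/1184595334580404224:ℝ)*y^12 + (1300075/21322716022447276032:ℝ)*y^13 + (185725/28430288029929701376:ℝ)*y^14 + (1077205/1535235553616203874304:ℝ)*y^15 + (33393355/442147839441466715799552:ℝ)*y^16 + (21607465/2652887036648800294797312:ℝ)*y^17 := by positivity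
    simp only [LB1]
    linarith
  have hid : (1 - (1/9:ℝ)*y) * (LB1 y)^2 = 1 - y^18 * ((756261275/429767699937105647757164544:ℝ) + (39803225/429767699937105647757164544:ℝ)*y + (151252255/20628849596981071092343898112:ℝ)*y^2 + (540186625/835468408677733379239927873536:ℝ)*y^3 + (2406285875/40102483616531202203516537929728:ℝ)*y^4 + (230166475/40102483616531202203516537929728:ℝ)*y^5 + (58232118175/103945637534048876111514866313854976:ℝ)*y^6 + (4325814493/77959228150536657083636149735391232:ℝ)*y^7 + (41594370125/7484085902451519080029070374597558272:ℝ)*y^8 + (9192355797625/16367695868661472228023576909244859940864:ℝ)*y^9 + (4990136004425/87294377966194518549459076849305919684608:ℝ)*y^10 + (766509919175/130941566949291777824188615273958879526912:ℝ)*y^11 + (102252423217945/169700270766282144060148445395050707866877952:ℝ)*y^12 + (31716012164375/509100812298846432180445336185152123600633856:ℝ)*y^13 + (140456625299375/21721634658084114439699001010566490606960377856:ℝ)*y^14 + (74058947885125/109965775456550829350976192615992858697736912896:ℝ)*y^15 + (1485535366401625/21113428887657759235387428982270628869965487276032:ℝ)*y^16 + (466882543726225/63340286662973277706162286946811886609896461828096:ℝ)*y^17)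 := by
    simp only [LB1]
    ring
  have hE0 : 0 ≤ (756261275/429767699937105647757164544:ℝ) + (39803225/429767699937105647757164544:ℝ)*y + (151252255/20628849596981071092343898112:ℝ)*y^2 + (540186625/835468408677733379239927873536:ℝ)*y^3 + (2406285875/40102483616531202203516537929728:ℝ)*y^4 + (230166475/40102483616531202203516537929728:ℝ)*y^5 + (58232118175/103945637534048876111514866313854976:ℝ)*y^6 + (4325814493/77959228150536657083636149735391232:ℝ)*y^7 + (41594370125/7484085902451519080029070374597558272:ℝ)*y^8 + (9192355797625/16367695868661472228023576909244859940864:ℝ)*y^9 + (4990136004425/87294377966194518549459076849305919684608:ℝ)*y^10 + (766509919175/130941566949291777824188615273958879526912:ℝ)*y^11 + (102252423217945/169700270766282144060148445395050707866877952:ℝ)*y^12 + (31716012164375/509100812298846432180445336185152123600633856:ℝ)*y^13 + (140456625299375/21721634658084114439699001010566490606960377856:ℝ)*y^14 + (74058947885125/109965775456550829350976192615992858697736912896:ℝ)*y^15 + (1485535366401625/21113428887657759235387428982270628869965487276032:ℝ)*y^16 + (466882543726225/63340286662973277706162286946811886609896461828096:ℝ)*y^17 := by positivity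
  have hR0 : 0 ≤ y^18 * ((756261275/429767699937105647757164544:ℝ) + (39803225/429767699937105647757164544:ℝ)*y + (151252255/20628849596981071092343898112:ℝ)*y^2 + (540186625/835468408677733379239927873536:ℝ)*y^3 + (2406285875/40102483616531202203516537929728:ℝ)*y^4 + (230166475/40102483616531202203516537929728:ℝ)*y^5 + (58232118175/103945637534048876111514866313854976:ℝ)*y^6 + (4325814493/77959228150536657083636149735391232:ℝ)*y^7 + (41594370125/7484085902451519080029070374597558272:ℝ)*y^8 + (9192355797625/16367695868661472228023576909244859940864:ℝ)*y^9 + (4990136004425/87294377966194518549459076849305919684608:ℝ)*y^10 + (766509919175/130941566949291777824188615273958879526912:ℝ)*y^11 + (102252423217945/169700270766282144060148445395050707866877952:ℝ)*y^12 + (31716012164375/509100812298846432180445336185152123600633856:ℝ)*y^13 + (140456625299375/21721634658084114439699001010566490606960377856:ℝ)*y^14 + (74058947885125/109965775456550829350976192615992858697736912896:ℝ)*y^15 + (1485535366401625/21113428887657759235387428982270628869965487276032:ℝ)*y^16 + (466882543726225/63340286662973277706162286946811886609896461828096:ℝ)*y^17) := by positivity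
  have hRle : y^18 * ((756261275/429767699937105647757164544:ℝ) + (39803225/429767699937105647757164544:ℝ)*y + (151252255/20628849596981071092343898112:ℝ)*y^2 + (540186625/835468408677733379239927873536:ℝ)*y^3 + (2406285875/40102483616531202203516537929728:ℝ)*y^4 + (230166475/40102483616531202203516537929728:ℝ)*y^5 + (58232118175/103945637534048876111514866313854976:ℝ)*y^6 + (4325814493/77959228150536657083636149735391232:ℝ)*y^7 + (41594370125/7484085902451519080029070374597558272:ℝ)*y^8 + (9192355797625/16367695868661472228023576909244859940864:ℝ)*y^9 + (4990136004425/87294377966194518549459076849305919684608:ℝ)*y^10 + (766509919175/130941566949291777824188615273958879526912:ℝ)*y^11 + (102252423217945/169700270766282144060148445395050707866877952:ℝ)*y^12 + (31716012164375/509100812298846432180445336185152123600633856:ℝ)*y^13 + (140456625299375/21721634658084114439699001010566490606960377856:ℝ)*y^14 + (74058947885125/109965775456550829350976192615992858697736912896:ℝ)*y^15 + (1485535366401625/21113428887657759235387428982270628869965487276032:ℝ)*y^16 + (466882543726225/63340286662973277706162286946811886609896461828096:ℝ)*y^17) ≤ (1/150094635296999121:ℝ) := by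
    calc y^18 * ((756261275/429767699937105647757164544:ℝ) + (39803225/429767699937105647757164544:ℝ)*y + (151252255/20628849596981071092343898112:ℝ)*y^2 + (540186625/835468408677733379239927873536:ℝ)*y^3 + (2406285875/40102483616531202203516537929728:ℝ)*y^4 + (230166475/40102483616531202203516537929728:ℝ)*y^5 + (58232118175/103945637534048876111514866313854976:ℝ)*y^6 + (4325814493/77959228150536657083636149735391232:ℝ)*y^7 + (41594370125/7484085902451519080029070374597558272:ℝ)*y^8 + (9192355797625/16367695868661472228023576909244859940864:ℝ)*y^9 + (4990136004425/87294377966194518549459076849305919684608:ℝ)*y^10 + (766509919175/130941566949291777824188615273958879526912:ℝ)*y^11 + (102252423217945/169700270766282144060148445395050707866877952:ℝ)*y^12 + (31716012164375/509100812298846432180445336185152123600633856:ℝ)*y^13 + (140456625299375/21721634658084114439699001010566490606960377856:ℝ)*y^14 + (74058947885125/109965775456550829350976192615992858697736912896:ℝ)*y^15 + (1485535366401625/21113428887657759235387428982270628869965487276032:ℝ)*y^16 + (466882543726225/63340286662973277706162286946811886609896461828096:ℝ)*y^17)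
        ≤ 1 * ((756261275/429767699937105647757164544:ℝ) + (39803225/429767699937105647757164544:ℝ)*y + (151252255/20628849596981071092343898112:ℝ)*y^2 + (540186625/835468408677733379239927873536:ℝ)*y^3 + (2406285875/40102483616531202203516537929728:ℝ)*y^4 + (230166475/40102483616531202203516537929728:ℝ)*y^5 + (58232118175/103945637534048876111514866313854976:ℝ)*y^6 + (4325814493/77959228150536657083636149735391232:ℝ)*y^7 + (41594370125/7484085902451519080029070374597558272:ℝ)*y^8 + (9192355797625/16367695868661472228023576909244859940864:ℝ)*y^9 + (4990136004425/87294377966194518549459076849305919684608:ℝ)*y^10 + (766509919175/130941566949291777824188615273958879526912:ℝ)*y^11 + (102252423217945/169700270766282144060148445395050707866877952:ℝ)*y^12 + (31716012164375/509100812298846432180445336185152123600633856:ℝ)*y^13 + (140456625299375/21721634658084114439699001010566490606960377856:ℝ)*y^14 + (74058947885125/109965775456550829350976192615992858697736912896:ℝ)*y^15 + (1485535366401625/21113428887657759235387428982270628869965487276032:ℝ)*y^16 + (466882543726225/63340286662973277706162286946811886609896461828096:ℝ)*y^17) := mul_le_mul_of_nonneg_right (pow_le_one₀ h0 h1) hE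0
      _ = (756261275/429767699937105647757164544:ℝ) + (39803225/429767699937105647757164544:ℝ)*y + (151252255/20628849596981071092343898112:ℝ)*y^2 + (540186625/835468408677733379239927873536:ℝ)*y^3 + (2406285875/40102483616531202203516537929728:ℝ)*y^4 + (230166475/40102483616531202203516537929728:ℝ)*y^5 + (58232118175/103945637534048876111514866313854976:ℝ)*y^6 + (4325814493/77959228150536657083636149735391232:ℝ)*y^7 + (41594370125/7484085902451519080029070374597558272:ℝ)*y^8 + (9192355797625/16367695868661472228023576909244859940864:ℝ)*y^9 + (4990136004425/87294377966194518549459076849305919684608:ℝ)*y^10 + (766509919175/130941566949291777824188615273958879526912:ℝ)*y^11 + (102252423217945/169700270766282144060148445395050707866877952:ℝ)*y^12 + (31716012164375/509100812298846432180445336185152123600633856:ℝ)*y^13 + (140456625299375/21721634658084114439699001010566490606960377856:ℝ)*y^14 + (74058947885125/109965775456550829350976192615992858697736912896:ℝ)*y^15 + (1485535366401625/21113428887657759235387428982270628869965487276032:ℝ)*y^16 + (466882543726225/63340286662973277706162286946811886609896461828096:ℝ)*y^17 := one_mul _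
      _ ≤ (1/150094635296999121:ℝ) := by linarith [(mul_le_of_le_one_right (show (0:ℝ) ≤ (39803225/429767699937105647757164544:ℝ) by norm_num) h1 : (39803225/429767699937105647757164544:ℝ)*y ≤ (39803225/429767699937105647757164544:ℝ)),
      (mul_le_of_le_one_right (show (0:ℝ) ≤ (151252255/20628849596981071092343898112:ℝ) by norm_num) (pow_le_one₀ h0 h1) : (151252255/20628849596981071092343898112:ℝ)*y^2 ≤ (151252255/20628849596981071092343898112:ℝ)),
      (mul_le_of_le_one_right (show (0:ℝ) ≤ (540186625/835468408677733379239927873536:ℝ) by norm_num) (pow_le_one₀ h0 h1) : (540186625/835468408677733379239927873536:ℝ)*y^3 ≤ (540186625/835468408677733379239927873536:ℝ)),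
      (mul_le_of_le_one_right (show (0:ℝ) ≤ (2406285875/40102483616531202203516537929728:ℝ) by norm_num) (pow_le_one₀ h0 h1) : (2406285875/40102483616531202203516537929728:ℝ)*y^4 ≤ (2406285875/40102483616531202203516537929728:ℝ)),
      (mul_le_of_le_one_right (show (0:ℝ) ≤ (230166475/40102483616531202203516537929728:ℝ) by norm_num) (pow_le_one₀ h0 h1) : (230166475/40102483616531202203516537929728:ℝ)*y^5 ≤ (230166475/40102483616531202203516537929728:ℝ)),
      (mul_le_of_le_one_right (show (0:ℝ) ≤ (58232118175/103945637534048876111514866313854976:ℝ) by norm_num) (pow_le_one₀ h0 h1) : (58232118175/103945637534048876111514866313854976:ℝ)*y^6 ≤ (58232118175/103945637534048876111514866313854976:ℝ)),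
      (mul_le_of_le_one_right (show (0:ℝ) ≤ (4325814493/77959228150536657083636149735391232:ℝ) by norm_num) (pow_le_one₀ h0 h1) : (4325814493/77959228150536657083636149735391232:ℝ)*y^7 ≤ (4325814493/77959228150536657083636149735391232:ℝ)),
      (mul_le_of_le_one_right (show (0:ℝ) ≤ (41594370125/7484085902451519080029070374597558272:ℝ) by norm_num) (pow_le_one₀ h0 h1) : (41594370125/7484085902451519080029070374597558272:ℝ)*y^8 ≤ (41594370125/7484085902451519080029070374597558272:ℝ)),
      (mul_le_of_le_one_right (show (0:ℝ) ≤ (9192355797625/16367695868661472228023576909244859940864:ℝ) by norm_num) (pow_le_one₀ h0 h1) : (9192355797625/16367695868661472228023576909244859940864:ℝ)*y^9 ≤ (9192355797625/16367695868661472228023576909244859940864:ℝ)),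
      (mul_le_of_le_one_right (show (0:ℝ) ≤ (4990136004425/87294377966194518549459076849305919684608:ℝ) by norm_num) (pow_le_one₀ h0 h1) : (4990136004425/87294377966194518549459076849305919684608:ℝ)*y^10 ≤ (4990136004425/87294377966194518549459076849305919684608:ℝ)),
      (mul_le_of_le_one_right (show (0:ℝ) ≤ (766509919175/130941566949291777824188615273958879526912:ℝ) by norm_num) (pow_le_one₀ h0 h1) : (766509919175/130941566949291777824188615273958879526912:ℝ)*y^11 ≤ (766509919175/130941566949291777824188615273958879526912:ℝ)),
      (mul_le_of_le_one_right (show (0:ℝ) ≤ (102252423217945/169700270766282144060148445395050707866877952:ℝ) by norm_num) (pow_le_one₀ h0 h1) : (102252423217945/169700270766282144060148445395050707866877952:ℝ)*y^12 ≤ (102252423217945/169700270766282144060148445395050707866877952:ℝ)),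
      (mul_le_of_le_one_right (show (0:ℝ) ≤ (31716012164375/509100812298846432180445336185152123600633856:ℝ) by norm_num) (pow_le_one₀ h0 h1) : (31716012164375/509100812298846432180445336185152123600633856:ℝ)*y^13 ≤ (31716012164375/509100812298846432180445336185152123600633856:ℝ)),
      (mul_le_of_le_one_right (show (0:ℝ) ≤ (140456625299375/21721634658084114439699001010566490606960377856:ℝ) by norm_num) (pow_le_one₀ h0 h1) : (140456625299375/21721634658084114439699001010566490606960377856:ℝ)*y^14 ≤ (140456625299375/21721634658084114439699001010566490606960377856:ℝ)),
      (mul_le_of_le_one_right (show (0:ℝ) ≤ (74058947885125/109965775456550829350976192615992858697736912896:ℝ) by norm_num) (pow_le_one₀ h0 h1) : (74058947885125/109965775456550829350976192615992858697736912896:ℝ)*y^15 ≤ (74058947885125/109965775456550829350976192615992858697736912896:ℝ)),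
      (mul_le_of_le_one_right (show (0:ℝ) ≤ (1485535366401625/21113428887657759235387428982270628869965487276032:ℝ) by norm_num) (pow_le_one₀ h0 h1) : (1485535366401625/21113428887657759235387428982270628869965487276032:ℝ)*y^16 ≤ (1485535366401625/21113428887657759235387428982270628869965487276032:ℝ)),
      (mul_le_of_le_one_right (show (0:ℝ) ≤ (466882543726225/63340286662973277706162286946811886609896461828096:ℝ) by norm_num) (pow_le_one₀ h0 h1) : (466882543726225/63340286662973277706162286946811886609896461828096:ℝ)*y^17 ≤ (466882543726225/63340286662973277706162286946811886609896461828096:ℝ))]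
  apply sqrt_bound hu hL (by norm_num)
  · rw [hid]; linarith
  · have hexp : (1 - (1/9:ℝ)*y) * (LB1 y + (1/266834907194665104:ℝ))^2
        = (1 - (1/9:ℝ)*y) * (LB1 y)^2
          + (1 - (1/9:ℝ)*y) * (2*(LB1 y)*(1/266834907194665104:ℝ) + (1/266834907194665104:ℝ)^2) := by ring
    have hu1 : (8/9:ℝ) ≤ 1 - (1/9:ℝ)*y := by nlinarith
    have hM : 2*(1/266834907194665104:ℝ) ≤ 2*(LB1 y)*(1/266834907194665104:ℝ) + (1/266834907194665104:ℝ)^2 := by nlinarith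
    have hkey : (8/9:ℝ) * (2*(1/266834907194665104:ℝ))
        ≤ (1 - (1/9:ℝ)*y) * (2*(LB1 y)*(1/266834907194665104:ℝ) + (1/266834907194665104:ℝ)^2) :=
      mul_le_mul hu1 hM (by norm_num) (by linarith)
    rw [hexp, hid]
    have hnum : (8/9:ℝ)*(2*(1/266834907194665104:ℝ)) = (1/150094635296999121:ℝ) := by norm_num
    linarith

set_option maxHeartbeats 1000000 in
lemma intval1 : (∫ θ in (0:ℝ)..(π/2), LB1 (Real.sin θ^2)) = (π/2) * (434519083365822072386788285870709/422002335644035211251467184766976:ℝ) := by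
  have hfun : ∀ θ : ℝ, LB1 (Real.sin θ^2)
      = ∑ n ∈ Finset.range 18, CL1.getD n 0 * Real.sin θ^(2*n) := by
    intro θ
    simp [LB1, CL1, Finset.sum_range_succ]
    ring
  rw [intervalIntegral.integral_congr
    (g := fun θ => ∑ n ∈ Finset.range 18, CL1.getD n 0 * Real.sin θ^(2*n))
    (fun θ _ => hfun θ)]
  rw [intervalIntegral.integral_finset_sum (f := fun n θ => CL1.getD n 0 * Real.sin θ^(2*n))
    (fun n _ => ((continuous_const.mul (Real.continuous_sin.pow _)).intervalIntegrable _ _))]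
  simp_rw [intervalIntegral.integral_const_mul, integral_sin_even]
  have hcomm : ∀ n : ℕ, CL1.getD n 0 * ((π/2) * W n) = (π/2) * (CL1.getD n 0 * W n) :=
    fun n => by ring
  simp_rw [hcomm, ← Finset.mul_sum]
  congr 1
  norm_num [Finset.sum_range_succ, CL1, W]

lemma ellK_bnd1 :
    (π/2) * (434519083365822072386788285870709/422002335644035211251467184766976:ℝ) ≤ ellK (1/3) ∧ ellK (1/3) ≤ (π/2) * ((434519083365822072386788285870709/422002335644035211251467184766976:ℝ) + (1/266834907194665104:ℝ)) := by
  have hqs : ∀ θ:ℝ, 0 < 1 - (1/9:ℝ)*Real.sin θ^2 := fun θ => by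
    nlinarith [Real.sin_sq_le_one θ, sq_nonneg (Real.sin θ)]
  have hmid : Continuous (fun θ:ℝ => 1 / Real.sqrt (1 - (1/9:ℝ) * Real.sin θ^2)) := by
    apply continuous_const.div (Real.continuous_sqrt.comp (by continuity))
    exact fun θ => ne_of_gt (Real.sqrt_pos.mpr (hqs θ))
  have hLB : Continuous LB1 := by unfold LB1; continuity
  have hLcont : Continuous (fun θ:ℝ => LB1 (Real.sin θ^2)) :=
    hLB.comp (Real.continuous_sin.pow 2)
  rw [ellK_eq_sin (by norm_num) (by norm_num) (by norm_num : (1/3:ℝ)^2 = (1/9:ℝ))]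
  constructor
  · rw [← intval1]
    apply intervalIntegral.integral_mono_on (by positivity)
      (hLcont.intervalIntegrable _ _) (hmid.intervalIntegrable _ _)
    intro θ _
    exact (key1 _ (sq_nonneg _) (Real.sin_sq_le_one θ)).1
  · have hupper : (∫ θ in (0:ℝ)..(π/2), (LB1 (Real.sin θ^2) + (1/266834907194665104:ℝ)))
        = (π/2) * ((434519083365822072386788285870709/422002335644035211251467184766976:ℝ) + (1/266834907194665104:ℝ)) := by
      rw [intervalIntegral.integral_add (hLcont.intervalIntegrable _ _)
        (intervalIntegrable_const), intval1]
      simp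
      ring
    rw [← hupper]
    apply intervalIntegral.integral_mono_on (by positivity)
      (hmid.intervalIntegrable _ _)
      ((hLcont.add continuous_const).intervalIntegrable _ _)
    intro θ _
    exact (key1 _ (sq_nonneg _) (Real.sin_sq_le_one θ)).2

noncomputable def LB2 : ℝ → ℝ := fun y => (1:ℝ) + (1/8:ℝ)*y + (3/128:ℝ)*y^2 + (5/1024:ℝ)*y^3 + (35/32768:ℝ)*y^4 + (63/262144:ℝ)*y^5 + (231/4194304:ℝ)*y^6 + (429/33554432:ℝ)*y^7 + (6435/2147483648:ℝ)*y^8 + (12155/17179869184:ℝ)*y^9 + (46189/274877906944:ℝ)*y^10 + (88179/2199023255552:ℝ)*y^11 + (676039/70368744177664:ℝ)*y^12 + (1300075/562949953421312:ℝ)*y^13 + (5014575/9007199254740992:ℝ)*y^14 + (9694845/72057594037927936:ℝ)*y^15 + (300540195/9223372036854775808:ℝ)*y^16 + (583401555/73786976294838206464:ℝ)*y^17 + (2268783825/1180591620717411303424:ℝ)*y^18 + (4418157975/9444732965739290427392:ℝ)*y^19 + (34461632205/302231454903657293676544:ℝ)*y^20 + (67282234305/2417851639229258349412352:ℝ)*y^21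 + (263012370465/38685626227668133590597632:ℝ)*y^22 + (514589420475/309485009821345068724781056:ℝ)*y^23 + (8061900920775/19807040628566084398385987584:ℝ)*y^24 + (15801325804719/158456325028528675187087900672:ℝ)*y^25 + (61989816618513/2535301200456458802993406410752:ℝ)*y^26
noncomputable def CL2 : List ℝ := [(1:ℝ), (1/8:ℝ), (3/128:ℝ), (5/1024:ℝ), (35/32768:ℝ), (63/262144:ℝ), (231/4194304:ℝ), (429/33554432:ℝ), (6435/2147483648:ℝ), (12155/17179869184:ℝ), (46189/274877906944:ℝ), (88179/2199023255552:ℝ), (676039/70368744177664:ℝ), (1300075/562949953421312:ℝ), (5014575/9007199254740992:ℝ), (9694845/72057594037927936:ℝ), (300540195/9223372036854775808:ℝ), (583401555/73786976294838206464:ℝ), (2268783825/1180591620717411303424:ℝ), (4418157975/9444732965739290427392:ℝ), (34461632205/302231454903657293676544:ℝ), (67282234305/2417851639229258349412352:ℝ), (263012370465/38685626227668133590597632:ℝ), (514589420475/309485009821345068724781056:ℝ), (8061900920775/19807040628566084398385987584:ℝ), (15801325804719/158456325028528675187087900672:ℝ), (61989816618513/2535301200456458802993406410752:ℝ)]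

set_option maxHeartbeats 10000000 in
lemma key2 (y : ℝ) (h0 : 0 ≤ y) (h1 : y ≤ 1) :
    LB2 y ≤ 1 / Real.sqrt (1 - (1/4:ℝ)*y) ∧
    1 / Real.sqrt (1 - (1/4:ℝ)*y) ≤ LB2 y + (1/27021597764222976:ℝ) := by
  have hu : 0 < 1 - (1/4:ℝ)*y := by nlinarith
  have hL : 1 ≤ LB2 y := by
    have hrest : 0 ≤ (1/8:ℝ)*y + (3/128:ℝ)*y^2 + (5/1024:ℝ)*y^3 + (35/32768:ℝ)*y^4 + (63/262144:ℝ)*y^5 + (231/4194304:ℝ)*y^6 + (429/33554432:ℝ)*y^7 + (6435/2147483648:ℝ)*y^8 + (12155/17179869184:ℝ)*y^9 + (46189/274877906944:ℝ)*y^10 + (88179/2199023255552:ℝ)*y^11 + (676039/70368744177664:ℝ)*y^12 + (1300075/562949953421312:ℝ)*y^13 + (5014575/9007199254740992:ℝ)*y^14 + (9694845/72057594037927936:ℝ)*y^15 + (300540195/9223372036854775808:ℝ)*y^16 + (583401555/73786976294838206464:ℝ)*y^17 + (2268783825/1180591620717411303424:ℝ)*y^18 + (4418157975/9444732965739290427392:ℝ)*y^19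 + (34461632205/302231454903657293676544:ℝ)*y^20 + (67282234305/2417851639229258349412352:ℝ)*y^21 + (263012370465/38685626227668133590597632:ℝ)*y^22 + (514589420475/309485009821345068724781056:ℝ)*y^23 + (8061900920775/19807040628566084398385987584:ℝ)*y^24 + (15801325804719/158456325028528675187087900672:ℝ)*y^25 + (61989816618513/2535301200456458802993406410752:ℝ)*y^26 := by positivity
    simp only [LB2]
    linarith
  have hid : (1 - (1/4:ℝ)*y) * (LB2 y)^2 = 1 - y^27 * ((121683714103007/10141204801825835211973625643008:ℝ) + (469351468683027/324518553658426726783156020576256:ℝ)*y + (339875201460123/1298074214633706907132624082305024:ℝ)*y^2 + (1095153426927063/20769187434139310514121985316880384:ℝ)*y^3 + (3709390639591665/332306998946228968225951765070086144:ℝ)*y^4 + (206983997689214907/85070591730234615865843651857942052864:ℝ)*y^5 + (22998221965468323/42535295865117307932921825928971026432:ℝ)*y^6 + (82909556497360593/680564733841876926926749214863536422912:ℝ)*y^7 + (604055340195055749/21778071482940061661655974875633165533184:ℝ)*y^8 + (4437196634766150255/696898287454081973172991196020261297061888:ℝ)*y^9 + (4101408781324387533/2787593149816327892691964784081045188247552:ℝ)*y^10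 + (15247821163105498149/44601490397061246283071436545296723011960832:ℝ)*y^11 + (56951263660488057189/713623846352979940529142984724747568191373312:ℝ)*y^12 + (854268954907320857835/45671926166590716193865151022383844364247891968:ℝ)*y^13 + (401833828963373922675/91343852333181432387730302044767688728495783936:ℝ)*y^14 + (1516763246468100298605/1461501637330902918203684832716283019655932542976:ℝ)*y^15 + (22963090080249611497485/93536104789177786765035829293842113257979682750464:ℝ)*y^16 + (174249330608952934304445/2993155353253689176481146537402947624255349848014848:ℝ)*y^17 + (165644425393695999277065/11972621413014756705924586149611790497021399392059392:ℝ)*y^18 + (631116632220832583057925/191561942608236107294793378393788647952342390272950272:ℝ)*y^19 + (2408985613200369476608335/3064991081731777716716694054300618367237478244367204352:ℝ)*y^20 + (73684369470430348911496215/392318858461667547739736838950479151006397215279002157056:ℝ)*y^21 + (17635034622793163283085365/392318858461667547739736838950479151006397215279002157056:ℝ)*y^22 + (67626524075232913111657791/6277101735386680763835789423207666416102355444464034512896:ℝ)*y^23 + (519354024760775639909790225/200867255532373784442745261542645325315275374222849104412672:ℝ)*y^24 + (3993432947314394843490971607/6427752177035961102167848369364650410088811975131171341205504:ℝ)*y^25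 + (3842737364396870509774331169/25711008708143844408671393477458601640355247900524685364822016:ℝ)*y^26) := by
    simp only [LB2]
    ring
  have hE0 : 0 ≤ (121683714103007/10141204801825835211973625643008:ℝ) + (469351468683027/324518553658426726783156020576256:ℝ)*y + (339875201460123/1298074214633706907132624082305024:ℝ)*y^2 + (1095153426927063/20769187434139310514121985316880384:ℝ)*y^3 + (3709390639591665/332306998946228968225951765070086144:ℝ)*y^4 + (206983997689214907/85070591730234615865843651857942052864:ℝ)*y^5 + (22998221965468323/42535295865117307932921825928971026432:ℝ)*y^6 + (82909556497360593/680564733841876926926749214863536422912:ℝ)*y^7 + (604055340195055749/21778071482940061661655974875633165533184:ℝ)*y^8 + (4437196634766150255/696898287454081973172991196020261297061888:ℝ)*y^9 + (4101408781324387533/2787593149816327892691964784081045188247552:ℝ)*y^10 + (15247821163105498149/44601490397061246283071436545296723011960832:ℝ)*y^11 + (56951263660488057189/713623846352979940529142984724747568191373312:ℝ)*y^12 + (854268954907320857835/45671926166590716193865151022383844364247891968:ℝ)*y^13 + (401833828963373922675/91343852333181432387730302044767688728495783936:ℝ)*y^14 + (1516763246468100298605/1461501637330902918203684832716283019655932542976:ℝ)*y^15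 + (22963090080249611497485/93536104789177786765035829293842113257979682750464:ℝ)*y^16 + (174249330608952934304445/2993155353253689176481146537402947624255349848014848:ℝ)*y^17 + (165644425393695999277065/11972621413014756705924586149611790497021399392059392:ℝ)*y^18 + (631116632220832583057925/191561942608236107294793378393788647952342390272950272:ℝ)*y^19 + (2408985613200369476608335/3064991081731777716716694054300618367237478244367204352:ℝ)*y^20 + (73684369470430348911496215/392318858461667547739736838950479151006397215279002157056:ℝ)*y^21 + (17635034622793163283085365/392318858461667547739736838950479151006397215279002157056:ℝ)*y^22 + (67626524075232913111657791/6277101735386680763835789423207666416102355444464034512896:ℝ)*y^23 + (519354024760775639909790225/200867255532373784442745261542645325315275374222849104412672:ℝ)*y^24 + (3993432947314394843490971607/6427752177035961102167848369364650410088811975131171341205504:ℝ)*y^25 + (3842737364396870509774331169/25711008708143844408671393477458601640355247900524685364822016:ℝ)*y^26 := by positivity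
  have hR0 : 0 ≤ y^27 * ((121683714103007/10141204801825835211973625643008:ℝ) + (469351468683027/324518553658426726783156020576256:ℝ)*y + (339875201460123/1298074214633706907132624082305024:ℝ)*y^2 + (1095153426927063/20769187434139310514121985316880384:ℝ)*y^3 + (3709390639591665/332306998946228968225951765070086144:ℝ)*y^4 + (206983997689214907/85070591730234615865843651857942052864:ℝ)*y^5 + (22998221965468323/42535295865117307932921825928971026432:ℝ)*y^6 + (82909556497360593/680564733841876926926749214863536422912:ℝ)*y^7 + (604055340195055749/21778071482940061661655974875633165533184:ℝ)*y^8 + (4437196634766150255/696898287454081973172991196020261297061888:ℝ)*y^9 + (4101408781324387533/2787593149816327892691964784081045188247552:ℝ)*y^10 + (15247821163105498149/44601490397061246283071436545296723011960832:ℝ)*y^11 + (56951263660488057189/713623846352979940529142984724747568191373312:ℝ)*y^12 + (854268954907320857835/45671926166590716193865151022383844364247891968:ℝ)*y^13 + (401833828963373922675/91343852333181432387730302044767688728495783936:ℝ)*y^14 + (1516763246468100298605/1461501637330902918203684832716283019655932542976:ℝ)*y^15 + (22963090080249611497485/93536104789177786765035829293842113257979682750464:ℝ)*y^16 + (174249330608952934304445/2993155353253689176481146537402947624255349848014848:ℝ)*y^17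 + (165644425393695999277065/11972621413014756705924586149611790497021399392059392:ℝ)*y^18 + (631116632220832583057925/191561942608236107294793378393788647952342390272950272:ℝ)*y^19 + (2408985613200369476608335/3064991081731777716716694054300618367237478244367204352:ℝ)*y^20 + (73684369470430348911496215/392318858461667547739736838950479151006397215279002157056:ℝ)*y^21 + (17635034622793163283085365/392318858461667547739736838950479151006397215279002157056:ℝ)*y^22 + (67626524075232913111657791/6277101735386680763835789423207666416102355444464034512896:ℝ)*y^23 + (519354024760775639909790225/200867255532373784442745261542645325315275374222849104412672:ℝ)*y^24 + (3993432947314394843490971607/6427752177035961102167848369364650410088811975131171341205504:ℝ)*y^25 + (3842737364396870509774331169/25711008708143844408671393477458601640355247900524685364822016:ℝ)*y^26) := by positivity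
  have hRle : y^27 * ((121683714103007/10141204801825835211973625643008:ℝ) + (469351468683027/324518553658426726783156020576256:ℝ)*y + (339875201460123/1298074214633706907132624082305024:ℝ)*y^2 + (1095153426927063/20769187434139310514121985316880384:ℝ)*y^3 + (3709390639591665/332306998946228968225951765070086144:ℝ)*y^4 + (206983997689214907/85070591730234615865843651857942052864:ℝ)*y^5 + (22998221965468323/42535295865117307932921825928971026432:ℝ)*y^6 + (82909556497360593/680564733841876926926749214863536422912:ℝ)*y^7 + (604055340195055749/21778071482940061661655974875633165533184:ℝ)*y^8 + (4437196634766150255/696898287454081973172991196020261297061888:ℝ)*y^9 + (4101408781324387533/2787593149816327892691964784081045188247552:ℝ)*y^10 + (15247821163105498149/44601490397061246283071436545296723011960832:ℝ)*y^11 + (56951263660488057189/713623846352979940529142984724747568191373312:ℝ)*y^12 + (854268954907320857835/45671926166590716193865151022383844364247891968:ℝ)*y^13 + (401833828963373922675/91343852333181432387730302044767688728495783936:ℝ)*y^14 + (1516763246468100298605/1461501637330902918203684832716283019655932542976:ℝ)*y^15 + (22963090080249611497485/93536104789177786765035829293842113257979682750464:ℝ)*y^16 + (174249330608952934304445/2993155353253689176481146537402947624255349848014848:ℝ)*y^17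 + (165644425393695999277065/11972621413014756705924586149611790497021399392059392:ℝ)*y^18 + (631116632220832583057925/191561942608236107294793378393788647952342390272950272:ℝ)*y^19 + (2408985613200369476608335/3064991081731777716716694054300618367237478244367204352:ℝ)*y^20 + (73684369470430348911496215/392318858461667547739736838950479151006397215279002157056:ℝ)*y^21 + (17635034622793163283085365/392318858461667547739736838950479151006397215279002157056:ℝ)*y^22 + (67626524075232913111657791/6277101735386680763835789423207666416102355444464034512896:ℝ)*y^23 + (519354024760775639909790225/200867255532373784442745261542645325315275374222849104412672:ℝ)*y^24 + (3993432947314394843490971607/6427752177035961102167848369364650410088811975131171341205504:ℝ)*y^25 + (3842737364396870509774331169/25711008708143844408671393477458601640355247900524685364822016:ℝ)*y^26) ≤ (1/18014398509481984:ℝ) := by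
    calc y^27 * ((121683714103007/10141204801825835211973625643008:ℝ) + (469351468683027/324518553658426726783156020576256:ℝ)*y + (339875201460123/1298074214633706907132624082305024:ℝ)*y^2 + (1095153426927063/20769187434139310514121985316880384:ℝ)*y^3 + (3709390639591665/332306998946228968225951765070086144:ℝ)*y^4 + (206983997689214907/85070591730234615865843651857942052864:ℝ)*y^5 + (22998221965468323/42535295865117307932921825928971026432:ℝ)*y^6 + (82909556497360593/680564733841876926926749214863536422912:ℝ)*y^7 + (604055340195055749/21778071482940061661655974875633165533184:ℝ)*y^8 + (4437196634766150255/696898287454081973172991196020261297061888:ℝ)*y^9 + (4101408781324387533/2787593149816327892691964784081045188247552:ℝ)*y^10 + (15247821163105498149/44601490397061246283071436545296723011960832:ℝ)*y^11 + (56951263660488057189/713623846352979940529142984724747568191373312:ℝ)*y^12 + (854268954907320857835/45671926166590716193865151022383844364247891968:ℝ)*y^13 + (401833828963373922675/91343852333181432387730302044767688728495783936:ℝ)*y^14 + (1516763246468100298605/1461501637330902918203684832716283019655932542976:ℝ)*y^15 + (22963090080249611497485/93536104789177786765035829293842113257979682750464:ℝ)*y^16 + (174249330608952934304445/2993155353253689176481146537402947624255349848014848:ℝ)*y^17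 + (165644425393695999277065/11972621413014756705924586149611790497021399392059392:ℝ)*y^18 + (631116632220832583057925/191561942608236107294793378393788647952342390272950272:ℝ)*y^19 + (2408985613200369476608335/3064991081731777716716694054300618367237478244367204352:ℝ)*y^20 + (73684369470430348911496215/392318858461667547739736838950479151006397215279002157056:ℝ)*y^21 + (17635034622793163283085365/392318858461667547739736838950479151006397215279002157056:ℝ)*y^22 + (67626524075232913111657791/6277101735386680763835789423207666416102355444464034512896:ℝ)*y^23 + (519354024760775639909790225/200867255532373784442745261542645325315275374222849104412672:ℝ)*y^24 + (3993432947314394843490971607/6427752177035961102167848369364650410088811975131171341205504:ℝ)*y^25 + (3842737364396870509774331169/25711008708143844408671393477458601640355247900524685364822016:ℝ)*y^26)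
        ≤ 1 * ((121683714103007/10141204801825835211973625643008:ℝ) + (469351468683027/324518553658426726783156020576256:ℝ)*y + (339875201460123/1298074214633706907132624082305024:ℝ)*y^2 + (1095153426927063/20769187434139310514121985316880384:ℝ)*y^3 + (3709390639591665/332306998946228968225951765070086144:ℝ)*y^4 + (206983997689214907/85070591730234615865843651857942052864:ℝ)*y^5 + (22998221965468323/42535295865117307932921825928971026432:ℝ)*y^6 + (82909556497360593/680564733841876926926749214863536422912:ℝ)*y^7 + (604055340195055749/21778071482940061661655974875633165533184:ℝ)*y^8 + (4437196634766150255/696898287454081973172991196020261297061888:ℝ)*y^9 + (4101408781324387533/2787593149816327892691964784081045188247552:ℝ)*y^10 + (15247821163105498149/44601490397061246283071436545296723011960832:ℝ)*y^11 + (56951263660488057189/713623846352979940529142984724747568191373312:ℝ)*y^12 + (854268954907320857835/45671926166590716193865151022383844364247891968:ℝ)*y^13 + (401833828963373922675/91343852333181432387730302044767688728495783936:ℝ)*y^14 + (1516763246468100298605/1461501637330902918203684832716283019655932542976:ℝ)*y^15 + (22963090080249611497485/93536104789177786765035829293842113257979682750464:ℝ)*y^16 + (174249330608952934304445/2993155353253689176481146537402947624255349848014848:ℝ)*y^17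 + (165644425393695999277065/11972621413014756705924586149611790497021399392059392:ℝ)*y^18 + (631116632220832583057925/191561942608236107294793378393788647952342390272950272:ℝ)*y^19 + (2408985613200369476608335/3064991081731777716716694054300618367237478244367204352:ℝ)*y^20 + (73684369470430348911496215/392318858461667547739736838950479151006397215279002157056:ℝ)*y^21 + (17635034622793163283085365/392318858461667547739736838950479151006397215279002157056:ℝ)*y^22 + (67626524075232913111657791/6277101735386680763835789423207666416102355444464034512896:ℝ)*y^23 + (519354024760775639909790225/200867255532373784442745261542645325315275374222849104412672:ℝ)*y^24 + (3993432947314394843490971607/6427752177035961102167848369364650410088811975131171341205504:ℝ)*y^25 + (3842737364396870509774331169/25711008708143844408671393477458601640355247900524685364822016:ℝ)*y^26) := mul_le_mul_of_nonneg_right (pow_le_one₀ h0 h1) hE0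
      _ = (121683714103007/10141204801825835211973625643008:ℝ) + (469351468683027/324518553658426726783156020576256:ℝ)*y + (339875201460123/1298074214633706907132624082305024:ℝ)*y^2 + (1095153426927063/20769187434139310514121985316880384:ℝ)*y^3 + (3709390639591665/332306998946228968225951765070086144:ℝ)*y^4 + (206983997689214907/85070591730234615865843651857942052864:ℝ)*y^5 + (22998221965468323/42535295865117307932921825928971026432:ℝ)*y^6 + (82909556497360593/680564733841876926926749214863536422912:ℝ)*y^7 + (604055340195055749/21778071482940061661655974875633165533184:ℝ)*y^8 + (4437196634766150255/696898287454081973172991196020261297061888:ℝ)*y^9 + (4101408781324387533/2787593149816327892691964784081045188247552:ℝ)*y^10 + (15247821163105498149/44601490397061246283071436545296723011960832:ℝ)*y^11 + (56951263660488057189/713623846352979940529142984724747568191373312:ℝ)*y^12 + (854268954907320857835/45671926166590716193865151022383844364247891968:ℝ)*y^13 + (401833828963373922675/91343852333181432387730302044767688728495783936:ℝ)*y^14 + (1516763246468100298605/1461501637330902918203684832716283019655932542976:ℝ)*y^15 + (22963090080249611497485/93536104789177786765035829293842113257979682750464:ℝ)*y^16 + (174249330608952934304445/2993155353253689176481146537402947624255349848014848:ℝ)*y^17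 + (165644425393695999277065/11972621413014756705924586149611790497021399392059392:ℝ)*y^18 + (631116632220832583057925/191561942608236107294793378393788647952342390272950272:ℝ)*y^19 + (2408985613200369476608335/3064991081731777716716694054300618367237478244367204352:ℝ)*y^20 + (73684369470430348911496215/392318858461667547739736838950479151006397215279002157056:ℝ)*y^21 + (17635034622793163283085365/392318858461667547739736838950479151006397215279002157056:ℝ)*y^22 + (67626524075232913111657791/6277101735386680763835789423207666416102355444464034512896:ℝ)*y^23 + (519354024760775639909790225/200867255532373784442745261542645325315275374222849104412672:ℝ)*y^24 + (3993432947314394843490971607/6427752177035961102167848369364650410088811975131171341205504:ℝ)*y^25 + (3842737364396870509774331169/25711008708143844408671393477458601640355247900524685364822016:ℝ)*y^26 := one_mul _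
      _ ≤ (1/18014398509481984:ℝ) := by linarith [(mul_le_of_le_one_right (show (0:ℝ) ≤ (469351468683027/324518553658426726783156020576256:ℝ) by norm_num) h1 : (469351468683027/324518553658426726783156020576256:ℝ)*y ≤ (469351468683027/324518553658426726783156020576256:ℝ)),
      (mul_le_of_le_one_right (show (0:ℝ) ≤ (339875201460123/1298074214633706907132624082305024:ℝ) by norm_num) (pow_le_one₀ h0 h1) : (339875201460123/1298074214633706907132624082305024:ℝ)*y^2 ≤ (339875201460123/1298074214633706907132624082305024:ℝ)),
      (mul_le_of_le_one_right (show (0:ℝ) ≤ (1095153426927063/20769187434139310514121985316880384:ℝ) by norm_num) (pow_le_one₀ h0 h1) : (1095153426927063/20769187434139310514121985316880384:ℝ)*y^3 ≤ (1095153426927063/20769187434139310514121985316880384:ℝ)),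
      (mul_le_of_le_one_right (show (0:ℝ) ≤ (3709390639591665/332306998946228968225951765070086144:ℝ) by norm_num) (pow_le_one₀ h0 h1) : (3709390639591665/332306998946228968225951765070086144:ℝ)*y^4 ≤ (3709390639591665/332306998946228968225951765070086144:ℝ)),
      (mul_le_of_le_one_right (show (0:ℝ) ≤ (206983997689214907/85070591730234615865843651857942052864:ℝ) by norm_num) (pow_le_one₀ h0 h1) : (206983997689214907/85070591730234615865843651857942052864:ℝ)*y^5 ≤ (206983997689214907/85070591730234615865843651857942052864:ℝ)),
      (mul_le_of_le_one_right (show (0:ℝ) ≤ (22998221965468323/42535295865117307932921825928971026432:ℝ) by norm_num) (pow_le_one₀ h0 h1) : (22998221965468323/42535295865117307932921825928971026432:ℝ)*y^6 ≤ (22998221965468323/42535295865117307932921825928971026432:ℝ)),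
      (mul_le_of_le_one_right (show (0:ℝ) ≤ (82909556497360593/680564733841876926926749214863536422912:ℝ) by norm_num) (pow_le_one₀ h0 h1) : (82909556497360593/680564733841876926926749214863536422912:ℝ)*y^7 ≤ (82909556497360593/680564733841876926926749214863536422912:ℝ)),
      (mul_le_of_le_one_right (show (0:ℝ) ≤ (604055340195055749/21778071482940061661655974875633165533184:ℝ) by norm_num) (pow_le_one₀ h0 h1) : (604055340195055749/21778071482940061661655974875633165533184:ℝ)*y^8 ≤ (604055340195055749/21778071482940061661655974875633165533184:ℝ)),
      (mul_le_of_le_one_right (show (0:ℝ) ≤ (4437196634766150255/696898287454081973172991196020261297061888:ℝ) by norm_num) (pow_le_one₀ h0 h1) : (4437196634766150255/696898287454081973172991196020261297061888:ℝ)*y^9 ≤ (4437196634766150255/696898287454081973172991196020261297061888:ℝ)),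
      (mul_le_of_le_one_right (show (0:ℝ) ≤ (4101408781324387533/2787593149816327892691964784081045188247552:ℝ) by norm_num) (pow_le_one₀ h0 h1) : (4101408781324387533/2787593149816327892691964784081045188247552:ℝ)*y^10 ≤ (4101408781324387533/2787593149816327892691964784081045188247552:ℝ)),
      (mul_le_of_le_one_right (show (0:ℝ) ≤ (15247821163105498149/44601490397061246283071436545296723011960832:ℝ) by norm_num) (pow_le_one₀ h0 h1) : (15247821163105498149/44601490397061246283071436545296723011960832:ℝ)*y^11 ≤ (15247821163105498149/44601490397061246283071436545296723011960832:ℝ)),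
      (mul_le_of_le_one_right (show (0:ℝ) ≤ (56951263660488057189/713623846352979940529142984724747568191373312:ℝ) by norm_num) (pow_le_one₀ h0 h1) : (56951263660488057189/713623846352979940529142984724747568191373312:ℝ)*y^12 ≤ (56951263660488057189/713623846352979940529142984724747568191373312:ℝ)),
      (mul_le_of_le_one_right (show (0:ℝ) ≤ (854268954907320857835/45671926166590716193865151022383844364247891968:ℝ) by norm_num) (pow_le_one₀ h0 h1) : (854268954907320857835/45671926166590716193865151022383844364247891968:ℝ)*y^13 ≤ (854268954907320857835/45671926166590716193865151022383844364247891968:ℝ)),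
      (mul_le_of_le_one_right (show (0:ℝ) ≤ (401833828963373922675/91343852333181432387730302044767688728495783936:ℝ) by norm_num) (pow_le_one₀ h0 h1) : (401833828963373922675/91343852333181432387730302044767688728495783936:ℝ)*y^14 ≤ (401833828963373922675/91343852333181432387730302044767688728495783936:ℝ)),
      (mul_le_of_le_one_right (show (0:ℝ) ≤ (1516763246468100298605/1461501637330902918203684832716283019655932542976:ℝ) by norm_num) (pow_le_one₀ h0 h1) : (1516763246468100298605/1461501637330902918203684832716283019655932542976:ℝ)*y^15 ≤ (1516763246468100298605/1461501637330902918203684832716283019655932542976:ℝ)),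
      (mul_le_of_le_one_right (show (0:ℝ) ≤ (22963090080249611497485/93536104789177786765035829293842113257979682750464:ℝ) by norm_num) (pow_le_one₀ h0 h1) : (22963090080249611497485/93536104789177786765035829293842113257979682750464:ℝ)*y^16 ≤ (22963090080249611497485/93536104789177786765035829293842113257979682750464:ℝ)),
      (mul_le_of_le_one_right (show (0:ℝ) ≤ (174249330608952934304445/2993155353253689176481146537402947624255349848014848:ℝ) by norm_num) (pow_le_one₀ h0 h1) : (174249330608952934304445/2993155353253689176481146537402947624255349848014848:ℝ)*y^17 ≤ (174249330608952934304445/2993155353253689176481146537402947624255349848014848:ℝ)),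
      (mul_le_of_le_one_right (show (0:ℝ) ≤ (165644425393695999277065/11972621413014756705924586149611790497021399392059392:ℝ) by norm_num) (pow_le_one₀ h0 h1) : (165644425393695999277065/11972621413014756705924586149611790497021399392059392:ℝ)*y^18 ≤ (165644425393695999277065/11972621413014756705924586149611790497021399392059392:ℝ)),
      (mul_le_of_le_one_right (show (0:ℝ) ≤ (631116632220832583057925/191561942608236107294793378393788647952342390272950272:ℝ) by norm_num) (pow_le_one₀ h0 h1) : (631116632220832583057925/191561942608236107294793378393788647952342390272950272:ℝ)*y^19 ≤ (631116632220832583057925/191561942608236107294793378393788647952342390272950272:ℝ)),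
      (mul_le_of_le_one_right (show (0:ℝ) ≤ (2408985613200369476608335/3064991081731777716716694054300618367237478244367204352:ℝ) by norm_num) (pow_le_one₀ h0 h1) : (2408985613200369476608335/3064991081731777716716694054300618367237478244367204352:ℝ)*y^20 ≤ (2408985613200369476608335/3064991081731777716716694054300618367237478244367204352:ℝ)),
      (mul_le_of_le_one_right (show (0:ℝ) ≤ (73684369470430348911496215/392318858461667547739736838950479151006397215279002157056:ℝ) by norm_num) (pow_le_one₀ h0 h1) : (73684369470430348911496215/392318858461667547739736838950479151006397215279002157056:ℝ)*y^21 ≤ (73684369470430348911496215/392318858461667547739736838950479151006397215279002157056:ℝ)),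
      (mul_le_of_le_one_right (show (0:ℝ) ≤ (17635034622793163283085365/392318858461667547739736838950479151006397215279002157056:ℝ) by norm_num) (pow_le_one₀ h0 h1) : (17635034622793163283085365/392318858461667547739736838950479151006397215279002157056:ℝ)*y^22 ≤ (17635034622793163283085365/392318858461667547739736838950479151006397215279002157056:ℝ)),
      (mul_le_of_le_one_right (show (0:ℝ) ≤ (67626524075232913111657791/6277101735386680763835789423207666416102355444464034512896:ℝ) by norm_num) (pow_le_one₀ h0 h1) : (67626524075232913111657791/6277101735386680763835789423207666416102355444464034512896:ℝ)*y^23 ≤ (67626524075232913111657791/6277101735386680763835789423207666416102355444464034512896:ℝ)),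
      (mul_le_of_le_one_right (show (0:ℝ) ≤ (519354024760775639909790225/200867255532373784442745261542645325315275374222849104412672:ℝ) by norm_num) (pow_le_one₀ h0 h1) : (519354024760775639909790225/200867255532373784442745261542645325315275374222849104412672:ℝ)*y^24 ≤ (519354024760775639909790225/200867255532373784442745261542645325315275374222849104412672:ℝ)),
      (mul_le_of_le_one_right (show (0:ℝ) ≤ (3993432947314394843490971607/6427752177035961102167848369364650410088811975131171341205504:ℝ) by norm_num) (pow_le_one₀ h0 h1) : (3993432947314394843490971607/6427752177035961102167848369364650410088811975131171341205504:ℝ)*y^25 ≤ (3993432947314394843490971607/6427752177035961102167848369364650410088811975131171341205504:ℝ)),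
      (mul_le_of_le_one_right (show (0:ℝ) ≤ (3842737364396870509774331169/25711008708143844408671393477458601640355247900524685364822016:ℝ) by norm_num) (pow_le_one₀ h0 h1) : (3842737364396870509774331169/25711008708143844408671393477458601640355247900524685364822016:ℝ)*y^26 ≤ (3842737364396870509774331169/25711008708143844408671393477458601640355247900524685364822016:ℝ))]
  apply sqrt_bound hu hL (by norm_num)
  · rw [hid]; linarith
  · have hexp : (1 - (1/4:ℝ)*y) * (LB2 y + (1/27021597764222976:ℝ))^2
        = (1 - (1/4:ℝ)*y) * (LB2 y)^2
          + (1 - (1/4:ℝ)*y) * (2*(LB2 y)*(1/27021597764222976:ℝ) + (1/27021597764222976:ℝ)^2) := by ring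
    have hu1 : (3/4:ℝ) ≤ 1 - (1/4:ℝ)*y := by nlinarith
    have hM : 2*(1/27021597764222976:ℝ) ≤ 2*(LB2 y)*(1/27021597764222976:ℝ) + (1/27021597764222976:ℝ)^2 := by nlinarith
    have hkey : (3/4:ℝ) * (2*(1/27021597764222976:ℝ))
        ≤ (1 - (1/4:ℝ)*y) * (2*(LB2 y)*(1/27021597764222976:ℝ) + (1/27021597764222976:ℝ)^2) :=
      mul_le_mul hu1 hM (by norm_num) (by linarith)
    rw [hexp, hid]
    have hnum : (3/4:ℝ)*(2*(1/27021597764222976:ℝ)) = (1/18014398509481984:ℝ) := by norm_num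
    linarith

set_option maxHeartbeats 1000000 in
lemma intval2 : (∫ θ in (0:ℝ)..(π/2), LB2 (Real.sin θ^2)) = (π/2) * (1531696543557481244462575061974175060205767009/1427247692705959881058285969449495136382746624:ℝ) := by
  have hfun : ∀ θ : ℝ, LB2 (Real.sin θ^2)
      = ∑ n ∈ Finset.range 27, CL2.getD n 0 * Real.sin θ^(2*n) := by
    intro θ
    simp [LB2, CL2, Finset.sum_range_succ]
    ring
  rw [intervalIntegral.integral_congr
    (g := fun θ => ∑ n ∈ Finset.range 27, CL2.getD n 0 * Real.sin θ^(2*n))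
    (fun θ _ => hfun θ)]
  rw [intervalIntegral.integral_finset_sum (f := fun n θ => CL2.getD n 0 * Real.sin θ^(2*n))
    (fun n _ => ((continuous_const.mul (Real.continuous_sin.pow _)).intervalIntegrable _ _))]
  simp_rw [intervalIntegral.integral_const_mul, integral_sin_even]
  have hcomm : ∀ n : ℕ, CL2.getD n 0 * ((π/2) * W n) = (π/2) * (CL2.getD n 0 * W n) :=
    fun n => by ring
  simp_rw [hcomm, ← Finset.mul_sum]
  congr 1
  norm_num [Finset.sum_range_succ, CL2, W]

lemma ellK_bnd2 :
    (π/2) * (1531696543557481244462575061974175060205767009/1427247692705959881058285969449495136382746624:ℝ) ≤ ellK (1/2) ∧ ellK (1/2) ≤ (π/2) * ((1531696543557481244462575061974175060205767009/1427247692705959881058285969449495136382746624:ℝ) + (1/27021597764222976:ℝ)) := by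
  have hqs : ∀ θ:ℝ, 0 < 1 - (1/4:ℝ)*Real.sin θ^2 := fun θ => by
    nlinarith [Real.sin_sq_le_one θ, sq_nonneg (Real.sin θ)]
  have hmid : Continuous (fun θ:ℝ => 1 / Real.sqrt (1 - (1/4:ℝ) * Real.sin θ^2)) := by
    apply continuous_const.div (Real.continuous_sqrt.comp (by continuity))
    exact fun θ => ne_of_gt (Real.sqrt_pos.mpr (hqs θ))
  have hLB : Continuous LB2 := by unfold LB2; continuity
  have hLcont : Continuous (fun θ:ℝ => LB2 (Real.sin θ^2)) :=
    hLB.comp (Real.continuous_sin.pow 2)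
  rw [ellK_eq_sin (by norm_num) (by norm_num) (by norm_num : (1/2:ℝ)^2 = (1/4:ℝ))]
  constructor
  · rw [← intval2]
    apply intervalIntegral.integral_mono_on (by positivity)
      (hLcont.intervalIntegrable _ _) (hmid.intervalIntegrable _ _)
    intro θ _
    exact (key2 _ (sq_nonneg _) (Real.sin_sq_le_one θ)).1
  · have hupper : (∫ θ in (0:ℝ)..(π/2), (LB2 (Real.sin θ^2) + (1/27021597764222976:ℝ)))
        = (π/2) * ((1531696543557481244462575061974175060205767009/1427247692705959881058285969449495136382746624:ℝ) + (1/27021597764222976:ℝ)) := by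
      rw [intervalIntegral.integral_add (hLcont.intervalIntegrable _ _)
        (intervalIntegrable_const), intval2]
      simp
      ring
    rw [← hupper]
    apply intervalIntegral.integral_mono_on (by positivity)
      (hmid.intervalIntegrable _ _)
      ((hLcont.add continuous_const).intervalIntegrable _ _)
    intro θ _
    exact (key2 _ (sq_nonneg _) (Real.sin_sq_le_one θ)).2


private lemma ellK'_eq : ellK' (1/3) = 3/2 * ellK (1/2) := by
  have h : Real.sqrt (1 - (1/3:ℝ)^2) = Real.sqrt (8/9) := by norm_num
  rw [ellK', h, landen]

/-- The extremal length of a hexagon curve on the cube punctured at its vertices,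
`6 (K/K')(1/3)`, lies within `9.40 × 10⁻¹⁵` of `3.83778471351302`. -/
theorem hexagon_curve_extremal_length :
    |6 * ellK (1/3) / ellK' (1/3) - 3.83778471351302| ≤ 9.40e-15 := by
  obtain ⟨h1l, h1u⟩ := ellK_bnd1
  obtain ⟨h2l, h2u⟩ := ellK_bnd2
  have hpi : (0:ℝ) < π/2 := by positivity
  have hA2pos : (0:ℝ) < (π/2) * (1531696543557481244462575061974175060205767009/1427247692705959881058285969449495136382746624:ℝ) := by positivity
  have hK2pos : 0 < ellK (1/2) := lt_of_lt_of_le hA2pos h2l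
  have hK1pos : 0 < ellK (1/3) := lt_of_lt_of_le (by positivity) h1l
  have hub : ellK (1/3) / ellK (1/2) ≤ ((316764411773684291922890165006593837/307639702684501669002319577695125504:ℝ)) / ((1531696543557481244462575061974175060205767009/1427247692705959881058285969449495136382746624:ℝ)) := by
    have h := div_le_div₀ (show (0:ℝ) ≤ (π/2) * ((434519083365822072386788285870709/422002335644035211251467184766976:ℝ) + (1/266834907194665104:ℝ)) by positivity)
      h1u hA2pos h2l
    rwa [show ((π/2) * ((434519083365822072386788285870709/422002335644035211251467184766976:ℝ) + (1/266834907194665104:ℝ))) / ((π/2) * (1531696543557481244462575061974175060205767009/1427247692705959881058285969449495136382746624:ℝ))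
        = ((316764411773684291922890165006593837/307639702684501669002319577695125504:ℝ)) / ((1531696543557481244462575061974175060205767009/1427247692705959881058285969449495136382746624:ℝ)) by rw [mul_div_mul_left _ _ (ne_of_gt hpi)]; norm_num] at h
  have hlb : ((434519083365822072386788285870709/422002335644035211251467184766976:ℝ)) / ((4595089630672443891844050214451200367705201699/4281743078117879643174857908348485409148239872:ℝ)) ≤ ellK (1/3) / ellK (1/2) := by
    have h := div_le_div₀ hK1pos.le h1l hK2pos h2u
    rwa [show ((π/2) * (434519083365822072386788285870709/422002335644035211251467184766976:ℝ)) / ((π/2) * ((1531696543557481244462575061974175060205767009/1427247692705959881058285969449495136382746624:ℝ) + (1/27021597764222976:ℝ)))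
        = ((434519083365822072386788285870709/422002335644035211251467184766976:ℝ)) / ((4595089630672443891844050214451200367705201699/4281743078117879643174857908348485409148239872:ℝ)) by rw [mul_div_mul_left _ _ (ne_of_gt hpi)]; norm_num] at h
  have hr : 6 * ellK (1/3) / ellK' (1/3) = 4 * (ellK (1/3) / ellK (1/2)) := by
    rw [ellK'_eq]
    field_simp
    ring
  rw [hr, abs_le]
  constructor
  · have hnum : (3.83778471351302:ℝ) - 9.40e-15 ≤ 4 * (((434519083365822072386788285870709/422002335644035211251467184766976:ℝ)) / ((4595089630672443891844050214451200367705201699/4281743078117879643174857908348485409148239872:ℝ))) := by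
      norm_num
    linarith
  · have hnum : 4 * (((316764411773684291922890165006593837/307639702684501669002319577695125504:ℝ)) / ((1531696543557481244462575061974175060205767009/1427247692705959881058285969449495136382746624:ℝ))) ≤ (3.83778471351302:ℝ) + 9.40e-15 := by
      norm_num
    linarith
end

section
/- Let K(k) = ∫₀¹ dt/√((1-t²)(1-k²t²)) for k ∈ (0,1) and K'(k) = K(√(1-k²)). Let a = (1 + √3)/√2 and t = 1 + 1/a⁴. Then |4·K(1/√t)/K'(1/√t) - 6.9282032302755| ≤ 2.74×10⁻¹⁴. -/
open intervalIntegral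

open MeasureTheory Set

noncomputable def fQ (c s : ℝ) : ℝ := 1 / Real.sqrt (s^4 + 2*c*s^2 + 1)

/-- substitution helper -/
lemma subst_integral {S T : Set ℝ} (hS : MeasurableSet S) (φ φ' : ℝ → ℝ)
    (hd : ∀ x ∈ S, HasDerivWithinAt φ (φ' x) S x) (hinj : InjOn φ S)
    (himg : φ '' S = T) (g h : ℝ → ℝ) (hpt : ∀ x ∈ S, |φ' x| * g (φ x) = h x) :
    ∫ x in T, g x = ∫ x in S, h x := by
  rw [← himg, integral_image_eq_integral_abs_deriv_smul hS hd hinj]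
  exact setIntegral_congr_fun hS (fun x hx => by simpa using hpt x hx)

lemma sqrt_helper {P u v : ℝ} (hu : 0 ≤ u) (h : P = u^2 * v) :
    Real.sqrt P = u * Real.sqrt v := by
  rw [h, Real.sqrt_mul (sq_nonneg u), Real.sqrt_sq hu]

lemma ellK_eq_quartic {k : ℝ} (hk0 : 0 ≤ k) (hk1 : k < 1) :
    ellK k = 2 * ∫ s in Ioo (0:ℝ) 1, fQ (1 - 2*k^2) s := by
  have h1 : ellK k = ∫ t in Ioo (0:ℝ) 1,
      1 / Real.sqrt ((1 - t ^ 2) * (1 - k ^ 2 * t ^ 2)) := by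
    rw [ellK, integral_of_le zero_le_one, integral_Ioc_eq_integral_Ioo]
  rw [h1, ← MeasureTheory.integral_const_mul]
  have hmeas : MeasurableSet (Ioo (0:ℝ) 1) := measurableSet_Ioo
  set φ : ℝ → ℝ := fun s => 2*s/(1+s^2) with hφ
  have hden : ∀ s : ℝ, (1:ℝ) + s^2 ≠ 0 := fun s => by positivity
  have hder : ∀ s : ℝ, HasDerivAt φ (2*((1-s^2)/(1+s^2)^2)) s := by
    intro s
    have h1 : HasDerivAt (fun s : ℝ => 2*s) 2 s := by
      simpa using (hasDerivAt_id s).const_mul 2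
    have h2 : HasDerivAt (fun s : ℝ => 1 + s^2) (2*s) s := by
      simpa using ((hasDerivAt_pow 2 s).const_add 1)
    have := h1.div h2 (hden s)
    exact this.congr_deriv (by ring)
  have hinj : InjOn φ (Ioo (0:ℝ) 1) := by
    intro a ha b hb hab
    simp only [hφ] at hab
    have h1 : 2*a*(1+b^2) = 2*b*(1+a^2) := by
      field_simp at hab; linarith [hab]
    have h2 : (a-b)*(1-a*b) = 0 := by linear_combination h1/2
    have h3 : 1 - a*b > 0 := by nlinarith [ha.1, ha.2, hb.1, hb.2]
    rcases mul_eq_zero.mp h2 with h | h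
    · linarith
    · linarith
  have himg : φ '' Ioo (0:ℝ) 1 = Ioo (0:ℝ) 1 := by
    apply Subset.antisymm
    · rintro _ ⟨s, hs, rfl⟩
      constructor
      · have := hs.1; positivity
      · rw [div_lt_one (by positivity)]
        nlinarith [hs.1, hs.2]
    · have hc : ContinuousOn φ (Icc (0:ℝ) 1) := by
        apply ContinuousOn.div
        · fun_prop
        · fun_prop
        · intro x _; exact hden x
      have h0 : φ 0 = 0 := by simp [hφ]
      have h1 : φ 1 = 1 := by norm_num [hφ]
      have := intermediate_value_Ioo (zero_le_one) hc
      rw [h0, h1] at this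
      exact this
  rw [subst_integral hmeas φ (fun s => 2*((1-s^2)/(1+s^2)^2))
      (fun s _ => (hder s).hasDerivWithinAt) hinj himg _ _ ?_]
  intro s hs
  obtain ⟨hs0, hs1⟩ := hs
  have hk2 : k^2 < 1 := by nlinarith
  have hQpos : 0 < s^4 + 2*(1 - 2*k^2)*s^2 + 1 := by
    nlinarith [sq_nonneg (1-s^2), mul_pos (mul_pos hs0 hs0) (show (0:ℝ) < 4-4*k^2 by nlinarith)]
  have key : (1 - (φ s) ^ 2) * (1 - k ^ 2 * (φ s) ^ 2)
      = ((1-s^2)/(1+s^2)^2)^2 * (s^4 + 2*(1 - 2*k^2)*s^2 + 1) := by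
    simp only [hφ]
    field_simp
    ring
  have hu : (0:ℝ) < (1-s^2)/(1+s^2)^2 := div_pos (by nlinarith) (by positivity)
  rw [fQ, sqrt_helper hu.le key, abs_of_pos (by linarith [hu] : (0:ℝ) < 2*((1-s^2)/(1+s^2)^2))]
  have hX : 0 < Real.sqrt (s^4 + 2*(1 - 2*k^2)*s^2 + 1) := Real.sqrt_pos.mpr hQpos
  set u := (1-s^2)/(1+s^2)^2
  set X := Real.sqrt (s^4 + 2*(1 - 2*k^2)*s^2 + 1)
  field_simp

lemma r3_pos : (0:ℝ) < Real.sqrt 3 := Real.sqrt_pos.mpr (by norm_num)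
lemma r3_sq : (Real.sqrt 3)^2 = 3 := Real.sq_sqrt (by norm_num)
lemma r33_pos : (0:ℝ) < 3 * Real.sqrt 3 := by positivity

lemma cubic_lower {d : ℝ} (hd : d^2 = 1) :
    ∫ x in Ioo d (Real.sqrt 3 + d), (1 / Real.sqrt (x^3 - d))
      = (2*Real.sqrt 3/Real.sqrt (3*Real.sqrt 3)) * ∫ s in Ioo (0:ℝ) 1, fQ (d*Real.sqrt 3/2) s := by
  rw [← MeasureTheory.integral_const_mul]
  set r := Real.sqrt 3 with hr
  set φ : ℝ → ℝ := fun s => r*s^2 + d with hφ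
  have hrpos : 0 < r := by rw [hr]; exact r3_pos
  have hrsq : r^2 = 3 := by rw [hr]; exact r3_sq
  have hd1 : -1 ≤ d := by nlinarith [sq_nonneg (d+1)]
  have hder : ∀ s : ℝ, HasDerivAt φ (2*r*s) s := by
    intro s
    have h2 := ((hasDerivAt_pow 2 s).const_mul r).add_const d
    exact h2.congr_deriv (by push_cast; ring)
  have hinj : InjOn φ (Ioo (0:ℝ) 1) := by
    intro a ha b hb hab
    simp only [hφ] at hab
    have h1 : r*(a-b)*(a+b) = 0 := by ring_nf; linarith [hab]
    have h2 : a + b > 0 := by linarith [ha.1, hb.1]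
    rcases mul_eq_zero.mp h1 with h | h
    · rcases mul_eq_zero.mp h with h' | h'
      · exact absurd h' (by rw [hr]; exact ne_of_gt r3_pos)
      · linarith
    · linarith
  have himg : φ '' Ioo (0:ℝ) 1 = Ioo d (r + d) := by
    apply Subset.antisymm
    · rintro _ ⟨s, hs, rfl⟩
      constructor
      · simp only [hφ]; nlinarith [hrpos, hs.1]
      · simp only [hφ]; nlinarith [hrpos, hs.1, hs.2]
    · have hc : ContinuousOn φ (Icc (0:ℝ) 1) := by fun_prop
      have h0 : φ 0 = d := by simp [hφ]
      have h1 : φ 1 = r + d := by simp [hφ]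
      have := intermediate_value_Ioo (zero_le_one) hc
      rw [h0, h1] at this
      exact this
  rw [subst_integral measurableSet_Ioo φ (fun s => 2*r*s)
      (fun s _ => (hder s).hasDerivWithinAt) hinj himg _ _ ?_]
  intro s hs
  obtain ⟨hs0, hs1⟩ := hs
  have key : (φ s)^3 - d = (s * Real.sqrt (3*r))^2 * (s^4 + 2*(d*r/2)*s^2 + 1) := by
    rw [mul_pow, Real.sq_sqrt r33_pos.le]
    simp only [hφ]
    linear_combination (r*s^6) * hrsq + (3*r*s^2 + d) * hd
  rw [fQ, sqrt_helper (mul_nonneg hs0.le (Real.sqrt_nonneg _)) key,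
    abs_of_pos (mul_pos (mul_pos two_pos hrpos) hs0)]
  have hQ : (0:ℝ) < s^4 + 2*(d*r/2)*s^2 + 1 := by
    nlinarith [sq_nonneg (2*s^2 - r), hrsq,
      mul_nonneg (mul_nonneg (show (0:ℝ) ≤ d+1 by linarith) hrpos.le) (sq_nonneg s)]
  have hX : 0 < Real.sqrt (s^4 + 2*(d*r/2)*s^2 + 1) := Real.sqrt_pos.mpr hQ
  have hY : 0 < Real.sqrt (3*r) := Real.sqrt_pos.mpr r33_pos
  set X := Real.sqrt (s^4 + 2*(d*r/2)*s^2 + 1)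
  set Y := Real.sqrt (3*r)
  field_simp

lemma cubic_upper {d : ℝ} (hd : d^2 = 1) :
    ∫ x in Ioi (Real.sqrt 3 + d), (1 / Real.sqrt (x^3 - d))
      = (2*Real.sqrt 3/Real.sqrt (3*Real.sqrt 3)) * ∫ s in Ioo (0:ℝ) 1, fQ (d*Real.sqrt 3/2) s := by
  rw [← MeasureTheory.integral_const_mul]
  set r := Real.sqrt 3 with hr
  have hrpos : 0 < r := by rw [hr]; exact r3_pos
  have hrsq : r^2 = 3 := by rw [hr]; exact r3_sq
  set ψ : ℝ → ℝ := fun s => r/s^2 + d with hψ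
  have hder : ∀ s ∈ Ioo (0:ℝ) 1, HasDerivAt ψ (-2*r/s^3) s := by
    intro s hs
    have hs0 : s ≠ 0 := ne_of_gt hs.1
    have h2 : HasDerivAt (fun s : ℝ => s^2) (2*s) s := by simpa using hasDerivAt_pow 2 s
    have h3 := ((h2.inv (pow_ne_zero 2 hs0)).const_mul r).add_const d
    have h4 : ψ = fun x : ℝ => r * (x^2)⁻¹ + d := by
      funext x; simp [hψ, div_eq_mul_inv]
    rw [h4]
    exact h3.congr_deriv (by field_simp)
  have hinj : InjOn ψ (Ioo (0:ℝ) 1) := by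
    intro a ha b hb hab
    simp only [hψ] at hab
    have ha0 : (0:ℝ) < a^2 := pow_pos ha.1 2
    have hb0 : (0:ℝ) < b^2 := pow_pos hb.1 2
    have h1 : r*b^2 = r*a^2 := by
      rw [add_left_inj, div_eq_div_iff (ne_of_gt ha0) (ne_of_gt hb0)] at hab
      linarith [hab]
    have h2 : a^2 = b^2 := by
      have := mul_left_cancel₀ (ne_of_gt hrpos) h1
      linarith
    nlinarith [ha.1, hb.1]
  have himg : ψ '' Ioo (0:ℝ) 1 = Ioi (r + d) := by
    apply Subset.antisymm
    · rintro _ ⟨s, hs, rfl⟩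
      have hs2 : 0 < s^2 := pow_pos hs.1 2
      simp only [hψ, mem_Ioi]
      have : r < r/s^2 := by
        rw [lt_div_iff₀ hs2]
        nlinarith [hs.1, hs.2]
      linarith
    · intro y hy
      rw [mem_Ioi] at hy
      have hyd : 0 < y - d := by linarith
      have hry : r/(y-d) < 1 := by rw [div_lt_one hyd]; linarith
      have hry0 : 0 < r/(y-d) := div_pos hrpos hyd
      refine ⟨Real.sqrt (r/(y-d)), ⟨Real.sqrt_pos.mpr hry0, ?_⟩, ?_⟩
      · exact (Real.sqrt_lt' one_pos).mpr (by norm_num [hry])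
      · simp only [hψ]
        rw [Real.sq_sqrt hry0.le]
        field_simp
        ring
  rw [subst_integral measurableSet_Ioo ψ (fun s => -2*r/s^3)
      (fun s hs => (hder s hs).hasDerivWithinAt) hinj himg _ _ ?_]
  intro s hs
  obtain ⟨hs0, hs1⟩ := hs
  have hs0' : s ≠ 0 := ne_of_gt hs0
  have key : (ψ s)^3 - d = (Real.sqrt (3*r)/s^3)^2 * (s^4 + 2*(d*r/2)*s^2 + 1) := by
    rw [div_pow, Real.sq_sqrt r33_pos.le]
    simp only [hψ]
    field_simp
    linear_combination r * hrsq + (3*r*s^4 + s^6*d) * hd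
  have habs : |-2*r/s^3| = 2*r/s^3 := by
    rw [abs_div, abs_of_pos (pow_pos hs0 3), abs_of_neg (by nlinarith : -2*r < 0)]
    ring
  rw [fQ, sqrt_helper (div_nonneg (Real.sqrt_nonneg _) (pow_pos hs0 3).le) key, habs]
  have hQ : (0:ℝ) < s^4 + 2*(d*r/2)*s^2 + 1 := by
    have hd1 : -1 ≤ d := by nlinarith [sq_nonneg (d+1)]
    nlinarith [sq_nonneg (2*s^2 - r), hrsq,
      mul_nonneg (mul_nonneg (show (0:ℝ) ≤ d+1 by linarith) hrpos.le) (sq_nonneg s)]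
  have hX : 0 < Real.sqrt (s^4 + 2*(d*r/2)*s^2 + 1) := Real.sqrt_pos.mpr hQ
  have hY : 0 < Real.sqrt (3*r) := Real.sqrt_pos.mpr r33_pos
  set X := Real.sqrt (s^4 + 2*(d*r/2)*s^2 + 1)
  set Y := Real.sqrt (3*r)
  field_simp

lemma cubic_cont {d : ℝ} (hd : d^2 = 1) :
    ContinuousOn (fun x : ℝ => 1 / Real.sqrt (x^3 - d)) (Ioi d) := by
  have hpos : ∀ x ∈ Ioi d, 0 < x^3 - d := by
    intro x hx
    rw [mem_Ioi] at hx
    nlinarith [sq_nonneg (2*x+d), sq_nonneg (x-d), sq_nonneg (x+d)]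
  apply ContinuousOn.div continuousOn_const
  · exact Real.continuous_sqrt.comp_continuousOn (by fun_prop)
  · exact fun x hx => ne_of_gt (Real.sqrt_pos.mpr (hpos x hx))

lemma cubic_pos {d : ℝ} (hd : d^2 = 1) {x : ℝ} (hx : d < x) : 0 < x^3 - d := by
  nlinarith [sq_nonneg (2*x+d), sq_nonneg (x-d), sq_nonneg (x+d)]

lemma cubic_integrable {d : ℝ} (hd : d^2 = 1) :
    MeasureTheory.IntegrableOn (fun x : ℝ => 1 / Real.sqrt (x^3 - d)) (Ioi d) := by
  have hd1 : -1 ≤ d := by nlinarith [sq_nonneg (d+1)]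
  have key : Ioi d = Ioc d (d+4) ∪ Ioi (d+4) := (Ioc_union_Ioi_eq_Ioi (by linarith)).symm
  rw [key]
  apply MeasureTheory.IntegrableOn.union
  · -- near the left endpoint: dominate by 2*(x-d)^(-1/2)
    have hg : MeasureTheory.IntegrableOn (fun x : ℝ => 2*(x - d) ^ (-(1/2) : ℝ)) (Ioc d (d+4)) := by
      have h0 : IntervalIntegrable (fun x : ℝ => x ^ (-(1/2) : ℝ)) MeasureTheory.volume 0 4 :=
        intervalIntegral.intervalIntegrable_rpow' (by norm_num)
      have h1 := (h0.comp_add_right (-d)).1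
      simp only [zero_sub, neg_neg] at h1
      have h2 : MeasureTheory.IntegrableOn (fun x : ℝ => (x + -d) ^ (-(1/2) : ℝ)) (Ioc d (d+4)) := by
        have : (4 : ℝ) - -d = d + 4 := by ring
        rw [this] at h1
        exact h1
      simpa [sub_eq_add_neg, IntegrableOn] using h2.const_mul 2
    apply MeasureTheory.Integrable.mono' hg
    · exact ((cubic_cont hd).mono Ioc_subset_Ioi_self).aestronglyMeasurable measurableSet_Ioc
    · rw [MeasureTheory.ae_restrict_iff' measurableSet_Ioc]
      refine MeasureTheory.ae_of_all _ (fun x hx => ?_)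
      have hxd : 0 < x - d := by linarith [hx.1]
      have h1 : (x - d)/4 ≤ x^3 - d := by nlinarith [sq_nonneg (2*x+d), hx.1]
      have h2 : Real.sqrt ((x-d)/4) ≤ Real.sqrt (x^3 - d) := Real.sqrt_le_sqrt h1
      rw [sqrt_helper (by norm_num : (0:ℝ) ≤ 1/2) (show (x-d)/4 = (1/2)^2*(x-d) by ring)] at h2
      have h3 : 0 < Real.sqrt (x - d) := Real.sqrt_pos.mpr hxd
      have h4 : 1 / Real.sqrt (x^3 - d) ≤ 2 / Real.sqrt (x-d) := by
        rw [div_le_div_iff₀ (Real.sqrt_pos.mpr (cubic_pos hd hx.1)) h3]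
        nlinarith [h2, Real.sqrt_pos.mpr (cubic_pos hd hx.1)]
      have h5 : (x - d) ^ (-(1/2) : ℝ) = 1 / Real.sqrt (x-d) := by
        rw [Real.rpow_neg hxd.le, Real.sqrt_eq_rpow]
        norm_num
      rw [Real.norm_eq_abs, abs_of_nonneg (by positivity), h5]
      calc 1 / Real.sqrt (x^3 - d) ≤ 2 / Real.sqrt (x-d) := h4
        _ = 2 * (1 / Real.sqrt (x-d)) := by ring
  · -- tail: dominate by 2*x^(-3/2)
    have hg : MeasureTheory.IntegrableOn (fun x : ℝ => 2*x ^ (-(3/2) : ℝ)) (Ioi (d+4)) := by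
      exact (integrableOn_Ioi_rpow_of_lt (by norm_num) (by linarith)).const_mul 2
    apply MeasureTheory.Integrable.mono' hg
    · exact ((cubic_cont hd).mono (Ioi_subset_Ioi (by linarith))).aestronglyMeasurable measurableSet_Ioi
    · rw [MeasureTheory.ae_restrict_iff' measurableSet_Ioi]
      refine MeasureTheory.ae_of_all _ (fun x hx => ?_)
      rw [mem_Ioi] at hx
      have hx3 : (3:ℝ) ≤ x := by linarith
      have hx0 : (0:ℝ) < x := by linarith
      have hd2 : d ≤ 1 := by nlinarith [sq_nonneg (d-1)]
      have h27 : (27:ℝ) ≤ x^3 := by nlinarith [sq_nonneg (x-3), sq_nonneg (x+3)]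
      have h1 : x^3/4 ≤ x^3 - d := by linarith
      have h2 : Real.sqrt (x^3/4) ≤ Real.sqrt (x^3 - d) := Real.sqrt_le_sqrt h1
      have hxs : 0 < Real.sqrt x := Real.sqrt_pos.mpr hx0
      have hx32 : Real.sqrt (x^3) = Real.sqrt x * x := by
        rw [show x^3 = (Real.sqrt x * x)^2 by rw [mul_pow, Real.sq_sqrt hx0.le]; ring,
          Real.sqrt_sq (by positivity)]
      rw [sqrt_helper (by norm_num : (0:ℝ) ≤ 1/2) (show x^3/4 = (1/2)^2*(x^3) by ring), hx32] at h2
      have h5 : x ^ (-(3/2) : ℝ) = 1 / (Real.sqrt x * x) := by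
        rw [show (-(3/2) : ℝ) = -(1/2) + -1 by norm_num, Real.rpow_add hx0,
          Real.rpow_neg hx0.le, Real.sqrt_eq_rpow, Real.rpow_neg_one]
        field_simp
      have hpos := cubic_pos hd (show d < x by linarith)
      rw [Real.norm_eq_abs, abs_of_nonneg (by positivity), h5]
      have h4 : 1 / Real.sqrt (x^3 - d) ≤ 2 / (Real.sqrt x * x) := by
        rw [div_le_div_iff₀ (Real.sqrt_pos.mpr hpos) (by positivity)]
        nlinarith [Real.sqrt_pos.mpr hpos, h2]
      calc 1 / Real.sqrt (x^3 - d) ≤ 2 / (Real.sqrt x * x) := h4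
        _ = 2 * (1 / (Real.sqrt x * x)) := by ring

lemma cubic_split {d : ℝ} (hd : d^2 = 1) :
    ∫ x in Ioi d, (1 / Real.sqrt (x^3 - d))
      = (∫ x in Ioo d (Real.sqrt 3 + d), (1 / Real.sqrt (x^3 - d)))
        + ∫ x in Ioi (Real.sqrt 3 + d), (1 / Real.sqrt (x^3 - d)) := by
  have h1 : Ioi d = Ioc d (Real.sqrt 3 + d) ∪ Ioi (Real.sqrt 3 + d) :=
    (Ioc_union_Ioi_eq_Ioi (by linarith [r3_pos])).symm
  rw [h1, MeasureTheory.setIntegral_union (Ioc_disjoint_Ioi le_rfl) measurableSet_Ioi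
    ((cubic_integrable hd).mono_set (by rw [h1]; exact subset_union_left))
    ((cubic_integrable hd).mono_set (by rw [h1]; exact subset_union_right)),
    MeasureTheory.integral_Ioc_eq_integral_Ioo]

section Isogeny

noncomputable def φiso : ℝ → ℝ := fun x => (x^3 + 4)/x^2

lemma φiso_deriv {x : ℝ} (hx : x ≠ 0) :
    HasDerivAt φiso ((x^4 - 8*x)/(x^2)^2) x := by
  have h1 : HasDerivAt (fun x : ℝ => x^3 + 4) (3*x^2) x := by
    simpa using (hasDerivAt_pow 3 x).add_const 4
  have h2 : HasDerivAt (fun x : ℝ => x^2) (2*x) x := by simpa using hasDerivAt_pow 2 x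
  have h3 := h1.div h2 (pow_ne_zero 2 hx)
  have : (3*x^2 * x^2 - (x^3+4)*(2*x))/(x^2)^2 = (x^4 - 8*x)/(x^2)^2 := by ring_nf
  rw [this] at h3
  exact h3

lemma φiso_gt {x : ℝ} (hx1 : -1 < x) (hx0 : x ≠ 0) (hx2 : x ≠ 2) : 3 < φiso x := by
  rw [φiso, lt_div_iff₀ (by positivity)]
  have h1 : 0 < x + 1 := by linarith
  have h2 : 0 < (x-2)^2 :=
    lt_of_le_of_ne (sq_nonneg (x-2)) (Ne.symm (pow_ne_zero 2 (sub_ne_zero.mpr hx2)))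
  nlinarith [mul_pos h1 h2]

lemma φiso_key {x : ℝ} (hx : x ≠ 0) :
    (φiso x)^3 - 27 = ((x^3-8)/x^3)^2 * (x^3 + 1) := by
  rw [φiso]
  field_simp
  ring

lemma φiso_pointwise {x u : ℝ} (hx1 : -1 < x) (hx0 : x ≠ 0)
    (hu : |(x^4 - 8*x)/(x^2)^2| = u) (hupos : 0 < u)
    (huval : u = (x^3-8)/x^3 ∨ u = -((x^3-8)/x^3)) :
    |(x^4 - 8*x)/(x^2)^2| * (1 / Real.sqrt ((φiso x)^3 - 27)) = 1 / Real.sqrt (x^3 + 1) := by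
  have hkey : (φiso x)^3 - 27 = u^2 * (x^3 + 1) := by
    rw [φiso_key hx0]
    rcases huval with h | h <;> rw [h] <;> ring
  rw [sqrt_helper hupos.le hkey, hu]
  have hx31 : 0 < x^3 + 1 := by
    have h1 : 0 < x + 1 := by linarith
    have h2 : 0 < x^2 - x + 1 := by nlinarith [sq_nonneg (2*x-1)]
    nlinarith [mul_pos h1 h2]
  have hX : 0 < Real.sqrt (x^3+1) := Real.sqrt_pos.mpr hx31
  field_simp

lemma iso_piece3 :
    ∫ X in Ioi (3:ℝ), (1 / Real.sqrt (X^3 - 27)) = ∫ x in Ioi (2:ℝ), (1 / Real.sqrt (x^3 + 1)) := by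
  have hder : ∀ x ∈ Ioi (2:ℝ), HasDerivAt φiso ((x^4 - 8*x)/(x^2)^2) x :=
    fun x hx => φiso_deriv (by rw [mem_Ioi] at hx; exact ne_of_gt (by linarith))
  have h8' : ∀ x : ℝ, 2 < x → 0 < x^3 - 8 := by
    intro x hx
    have hq : 0 < x^2 + 2*x + 4 := by nlinarith [sq_nonneg (x+1)]
    nlinarith [mul_pos (show (0:ℝ) < x - 2 by linarith) hq]
  have hderiv_pos : ∀ x ∈ Ioi (2:ℝ), 0 < (x^4 - 8*x)/(x^2)^2 := by
    intro x hx
    rw [mem_Ioi] at hx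
    have hx0 : (0:ℝ) < x := by linarith
    apply div_pos (by nlinarith [mul_pos hx0 (h8' x hx)]) (by positivity)
  have hmono : StrictMonoOn φiso (Ioi (2:ℝ)) := by
    apply strictMonoOn_of_deriv_pos (convex_Ioi 2)
    · intro x hx
      exact ((φiso_deriv (by rw [mem_Ioi] at hx; exact ne_of_gt (by linarith))).continuousAt).continuousWithinAt
    · intro x hx
      rw [interior_Ioi] at hx
      rw [(φiso_deriv (by rw [mem_Ioi] at hx; exact ne_of_gt (by linarith))).deriv]
      exact hderiv_pos x hx
  have himg : φiso '' Ioi (2:ℝ) = Ioi (3:ℝ) := by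
    apply Subset.antisymm
    · rintro _ ⟨x, hx, rfl⟩
      rw [mem_Ioi] at hx ⊢
      exact φiso_gt (by linarith) (by positivity) (ne_of_gt hx)
    · intro y hy
      rw [mem_Ioi] at hy
      have hc : ContinuousOn φiso (Icc (2:ℝ) y) := by
        apply ContinuousOn.div (by fun_prop) (by fun_prop)
        intro x hx
        have := hx.1
        positivity
      have h2 : φiso 2 = 3 := by rw [φiso]; norm_num
      have hyy : y < φiso y := by
        rw [φiso, lt_div_iff₀ (by positivity : (0:ℝ) < y^2)]
        nlinarith
      have := intermediate_value_Ioo (by linarith : (2:ℝ) ≤ y) hc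
      rw [h2] at this
      have hmem : y ∈ Ioo (3:ℝ) (φiso y) := ⟨hy, hyy⟩
      obtain ⟨x, hx, hfx⟩ := this hmem
      exact ⟨x, hx.1, hfx⟩
  rw [← himg, integral_image_eq_integral_abs_deriv_smul measurableSet_Ioi
    (fun x hx => (hder x hx).hasDerivWithinAt) hmono.injOn]
  apply setIntegral_congr_fun measurableSet_Ioi
  intro x hx
  rw [mem_Ioi] at hx
  have h8 : 0 < x^3 - 8 := h8' x hx
  have hx3 : (0:ℝ) < x^3 := by positivity
  have habs : |(x^4 - 8*x)/(x^2)^2| = (x^3-8)/x^3 := by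
    rw [abs_of_pos (div_pos (by nlinarith) (by positivity))]
    field_simp
  simp only [smul_eq_mul]
  exact φiso_pointwise (by linarith) (by positivity) habs
    (div_pos h8 hx3) (Or.inl rfl)


lemma iso_piece1 :
    ∫ X in Ioi (3:ℝ), (1 / Real.sqrt (X^3 - 27)) = ∫ x in Ioo (-1:ℝ) 0, (1 / Real.sqrt (x^3 + 1)) := by
  have hne : ∀ x : ℝ, x ∈ Ioo (-1:ℝ) 0 → x ≠ 0 := fun x hx => ne_of_lt hx.2
  have hder : ∀ x ∈ Ioo (-1:ℝ) 0, HasDerivAt φiso ((x^4 - 8*x)/(x^2)^2) x :=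
    fun x hx => φiso_deriv (hne x hx)
  have hderiv_pos : ∀ x ∈ Ioo (-1:ℝ) 0, 0 < (x^4 - 8*x)/(x^2)^2 := by
    intro x hx
    have hx2 : (0:ℝ) < x^2 := pow_pos (neg_pos.mpr hx.2) 2 |>.trans_eq (by ring)
    apply div_pos (by nlinarith [sq_nonneg (x^2), hx.2]) (by positivity)
  have hmono : StrictMonoOn φiso (Ioo (-1:ℝ) 0) := by
    apply strictMonoOn_of_deriv_pos (convex_Ioo (-1) 0)
    · intro x hx
      exact ((φiso_deriv (hne x hx)).continuousAt).continuousWithinAt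
    · intro x hx
      rw [interior_Ioo] at hx
      rw [(φiso_deriv (hne x hx)).deriv]
      exact hderiv_pos x hx
  have himg : φiso '' Ioo (-1:ℝ) 0 = Ioi (3:ℝ) := by
    apply Subset.antisymm
    · rintro _ ⟨x, hx, rfl⟩
      rw [mem_Ioi]
      exact φiso_gt hx.1 (hne x hx) (by linarith [hx.2])
    · intro y hy
      rw [mem_Ioi] at hy
      have hy0 : (0:ℝ) < y := by linarith
      have hx₀1 : -1 < -(1/y) := by
        have : 1/y < 1 := by rw [div_lt_one hy0]; linarith
        linarith
      have hx₀0 : -(1/y) < 0 := neg_lt_zero.mpr (by positivity)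
      have hc : ContinuousOn φiso (Icc (-1:ℝ) (-(1/y))) := by
        apply ContinuousOn.div (by fun_prop) (by fun_prop)
        intro x hx
        have hxneg : x < 0 := lt_of_le_of_lt hx.2 hx₀0
        exact pow_ne_zero 2 (ne_of_lt hxneg)
      have hm1 : φiso (-1) = 3 := by rw [φiso]; norm_num
      have hφx₀ : y < φiso (-(1/y)) := by
        have hsq : (0:ℝ) < (-(1/y))^2 := by
          have e : (-(1/y))^2 = (1/y)^2 := by ring
          rw [e]; positivity
        rw [φiso, lt_div_iff₀ hsq]
        have e1 : y * (-(1/y))^2 = 1/y := by field_simp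
        have e2 : (-(1/y))^3 = -(1/y^3) := by ring
        rw [e1, e2]
        have hy' : 1/y < 1/3 := by rw [div_lt_div_iff₀ hy0 (by norm_num)]; linarith
        have hy'' : 1/y^3 < 1 := by
          rw [div_lt_one (by positivity)]
          nlinarith [sq_nonneg (y-3), sq_nonneg (y+3)]
        linarith
      have := intermediate_value_Ioo (le_of_lt (by linarith : (-1:ℝ) < -(1/y))) hc
      rw [hm1] at this
      obtain ⟨x, hx, hfx⟩ := this ⟨hy, hφx₀⟩
      exact ⟨x, ⟨hx.1, lt_trans hx.2 hx₀0⟩, hfx⟩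
  rw [← himg, integral_image_eq_integral_abs_deriv_smul measurableSet_Ioo
    (fun x hx => (hder x hx).hasDerivWithinAt) hmono.injOn]
  apply setIntegral_congr_fun measurableSet_Ioo
  intro x hx
  have hx0 : x ≠ 0 := hne x hx
  have hx3neg : x^3 < 0 := by nlinarith [hx.2, sq_nonneg x, pow_pos (neg_pos.mpr hx.2) 3]
  have h8 : x^3 - 8 < 0 := by linarith
  have hu : 0 < (x^3-8)/x^3 := div_pos_of_neg_of_neg h8 hx3neg
  have habs : |(x^4 - 8*x)/(x^2)^2| = (x^3-8)/x^3 := by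
    rw [abs_of_pos (hderiv_pos x hx)]
    field_simp
  simp only [smul_eq_mul]
  exact φiso_pointwise hx.1 hx0 habs hu (Or.inl rfl)

lemma iso_piece2 :
    ∫ X in Ioi (3:ℝ), (1 / Real.sqrt (X^3 - 27)) = ∫ x in Ioo (0:ℝ) 2, (1 / Real.sqrt (x^3 + 1)) := by
  have hne : ∀ x : ℝ, x ∈ Ioo (0:ℝ) 2 → x ≠ 0 := fun x hx => ne_of_gt hx.1
  have hder : ∀ x ∈ Ioo (0:ℝ) 2, HasDerivAt φiso ((x^4 - 8*x)/(x^2)^2) x :=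
    fun x hx => φiso_deriv (hne x hx)
  have hderiv_neg : ∀ x ∈ Ioo (0:ℝ) 2, (x^4 - 8*x)/(x^2)^2 < 0 := by
    intro x hx
    have h1 : 0 < x^2 + 2*x + 4 := by nlinarith [sq_nonneg (x+1)]
    have h2 : x^3 - 8 < 0 := by nlinarith [mul_pos (show (0:ℝ) < 2-x by linarith [hx.2]) h1]
    apply div_neg_of_neg_of_pos (by nlinarith [mul_pos hx.1 (show (0:ℝ) < 8 - x^3 by linarith)])
      (pow_pos (pow_pos hx.1 2) 2)
  have hanti : StrictAntiOn φiso (Ioo (0:ℝ) 2) := by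
    apply strictAntiOn_of_deriv_neg (convex_Ioo 0 2)
    · intro x hx
      exact ((φiso_deriv (hne x hx)).continuousAt).continuousWithinAt
    · intro x hx
      rw [interior_Ioo] at hx
      rw [(φiso_deriv (hne x hx)).deriv]
      exact hderiv_neg x hx
  have himg : φiso '' Ioo (0:ℝ) 2 = Ioi (3:ℝ) := by
    apply Subset.antisymm
    · rintro _ ⟨x, hx, rfl⟩
      rw [mem_Ioi]
      exact φiso_gt (by linarith [hx.1]) (hne x hx) (ne_of_lt hx.2)
    · intro y hy
      rw [mem_Ioi] at hy
      have hy0 : (0:ℝ) < y := by linarith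
      have hx₀0 : 0 < 2/y := by positivity
      have hx₀2 : 2/y < 2 := by rw [div_lt_iff₀ hy0]; nlinarith
      have hc : ContinuousOn φiso (Icc (2/y) 2) := by
        apply ContinuousOn.div (by fun_prop) (by fun_prop)
        intro x hx
        exact pow_ne_zero 2 (ne_of_gt (lt_of_lt_of_le hx₀0 hx.1))
      have hm2 : φiso 2 = 3 := by rw [φiso]; norm_num
      have hφx₀ : y < φiso (2/y) := by
        rw [φiso, lt_div_iff₀ (by positivity : (0:ℝ) < (2/y)^2)]
        have e1 : y * (2/y)^2 = 4/y := by field_simp; ring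
        have e2 : ((2/y):ℝ)^3 = 8/y^3 := by ring
        rw [e1, e2]
        have h1 : 4/y < 4 := by rw [div_lt_iff₀ hy0]; nlinarith
        have h2 : (0:ℝ) < 8/y^3 := by positivity
        linarith
      have := intermediate_value_Ioo' (le_of_lt hx₀2) hc
      rw [hm2] at this
      obtain ⟨x, hx, hfx⟩ := this ⟨hy, hφx₀⟩
      exact ⟨x, ⟨lt_trans hx₀0 hx.1, hx.2⟩, hfx⟩
  rw [← himg, integral_image_eq_integral_abs_deriv_smul measurableSet_Ioo
    (fun x hx => (hder x hx).hasDerivWithinAt) hanti.injOn]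
  apply setIntegral_congr_fun measurableSet_Ioo
  intro x hx
  have hx0 : x ≠ 0 := hne x hx
  have hx3pos : 0 < x^3 := pow_pos hx.1 3
  have h1 : 0 < x^2 + 2*x + 4 := by nlinarith [sq_nonneg (x+1)]
  have h8 : x^3 - 8 < 0 := by nlinarith [mul_pos (show (0:ℝ) < 2-x by linarith [hx.2]) h1]
  have hu : 0 < -((x^3-8)/x^3) := by
    rw [neg_pos]
    exact div_neg_of_neg_of_pos h8 hx3pos
  have habs : |(x^4 - 8*x)/(x^2)^2| = -((x^3-8)/x^3) := by
    rw [abs_of_neg (hderiv_neg x hx)]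
    field_simp
  simp only [smul_eq_mul]
  exact φiso_pointwise (by linarith [hx.1]) hx0 habs hu (Or.inr rfl)

end Isogeny

lemma sqrt27 : Real.sqrt 27 = 3 * Real.sqrt 3 := by
  rw [show (27:ℝ) = 3^2*3 by norm_num, Real.sqrt_mul (by positivity), Real.sqrt_sq (by norm_num)]

lemma iso_scale :
    ∫ X in Ioi (3:ℝ), (1 / Real.sqrt (X^3 - 27))
      = (1/Real.sqrt 3) * ∫ z in Ioi (1:ℝ), (1 / Real.sqrt (z^3 - 1)) := by
  rw [← MeasureTheory.integral_const_mul]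
  have hder : ∀ z ∈ Ioi (1:ℝ), HasDerivAt (fun z : ℝ => 3*z) 3 z :=
    fun z _ => by simpa using (hasDerivAt_id z).const_mul 3
  have hinj : InjOn (fun z : ℝ => 3*z) (Ioi 1) := fun a _ b _ h => by
    simpa using mul_left_cancel₀ (by norm_num : (3:ℝ) ≠ 0) h
  have himg : (fun z : ℝ => 3*z) '' Ioi 1 = Ioi 3 := by
    apply Subset.antisymm
    · rintro _ ⟨z, hz, rfl⟩
      rw [mem_Ioi] at hz ⊢
      show (3:ℝ) < 3*z
      linarith
    · intro y hy
      rw [mem_Ioi] at hy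
      exact ⟨y/3, by rw [mem_Ioi]; linarith, by field_simp⟩
  rw [subst_integral measurableSet_Ioi (fun z : ℝ => 3*z) (fun _ => 3)
      (fun z hz => (hder z hz).hasDerivWithinAt) hinj himg _ _ ?_]
  intro z hz
  rw [mem_Ioi] at hz
  have key : (3*z)^3 - 27 = (Real.sqrt 27)^2 * (z^3 - 1) := by
    rw [Real.sq_sqrt (by norm_num : (27:ℝ) ≥ 0)]
    ring
  rw [sqrt_helper (Real.sqrt_nonneg 27) key, sqrt27]
  have hz3 : 0 < z^3 - 1 := cubic_pos (by norm_num) hz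
  have hX : 0 < Real.sqrt (z^3-1) := Real.sqrt_pos.mpr hz3
  have h3 : 0 < Real.sqrt 3 := r3_pos
  rw [abs_of_pos (by norm_num : (0:ℝ) < 3)]
  field_simp

lemma isoA :
    ∫ x in Ioi (-1:ℝ), (1 / Real.sqrt (x^3 + 1))
      = Real.sqrt 3 * ∫ z in Ioi (1:ℝ), (1 / Real.sqrt (z^3 - 1)) := by
  have hfeq : (fun x : ℝ => 1/Real.sqrt (x^3 - (-1))) = fun x : ℝ => 1/Real.sqrt (x^3+1) := by
    funext x; norm_num
  have hint : MeasureTheory.IntegrableOn (fun x : ℝ => 1 / Real.sqrt (x^3 + 1)) (Ioi (-1:ℝ)) := by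
    have := cubic_integrable (show ((-1:ℝ))^2 = 1 by norm_num)
    rwa [hfeq] at this
  have hsplit1 : Ioi (-1:ℝ) = Ioc (-1) 0 ∪ Ioi 0 := (Ioc_union_Ioi_eq_Ioi (by norm_num)).symm
  have hsplit2 : Ioi (0:ℝ) = Ioc 0 2 ∪ Ioi 2 := (Ioc_union_Ioi_eq_Ioi (by norm_num)).symm
  have e1 : ∫ x in Ioi (-1:ℝ), (1 / Real.sqrt (x^3 + 1))
      = (∫ x in Ioo (-1:ℝ) 0, (1 / Real.sqrt (x^3 + 1)))
        + ((∫ x in Ioo (0:ℝ) 2, (1 / Real.sqrt (x^3 + 1)))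
          + ∫ x in Ioi (2:ℝ), (1 / Real.sqrt (x^3 + 1))) := by
    rw [hsplit1, MeasureTheory.setIntegral_union (Ioc_disjoint_Ioi le_rfl) measurableSet_Ioi
      (hint.mono_set (by rw [hsplit1]; exact subset_union_left))
      (hint.mono_set (by rw [hsplit1]; exact subset_union_right)),
      MeasureTheory.integral_Ioc_eq_integral_Ioo]
    congr 1
    have hint0 : MeasureTheory.IntegrableOn (fun x : ℝ => 1 / Real.sqrt (x^3 + 1)) (Ioi (0:ℝ)) :=
      hint.mono_set (by rw [hsplit1]; exact subset_union_right)
    rw [hsplit2, MeasureTheory.setIntegral_union (Ioc_disjoint_Ioi le_rfl) measurableSet_Ioi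
      (hint0.mono_set (by rw [hsplit2]; exact subset_union_left))
      (hint0.mono_set (by rw [hsplit2]; exact subset_union_right)),
      MeasureTheory.integral_Ioc_eq_integral_Ioo]
  rw [e1, ← iso_piece1, ← iso_piece2, ← iso_piece3, iso_scale]
  have h3 : 0 < Real.sqrt 3 := r3_pos
  have hsq : Real.sqrt 3 * Real.sqrt 3 = 3 := by
    have := r3_sq; nlinarith
  set I := ∫ z in Ioi (1:ℝ), (1 / Real.sqrt (z^3 - 1)) with hI
  have e2 : (1/Real.sqrt 3) * I + ((1/Real.sqrt 3) * I + (1/Real.sqrt 3) * I)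
      = (3/Real.sqrt 3) * I := by ring
  have e3 : (3:ℝ)/Real.sqrt 3 = Real.sqrt 3 := by
    rw [div_eq_iff (ne_of_gt h3)]; exact hsq.symm
  rw [e2, e3]

lemma core_identity :
    ellK (Real.sqrt ((2+Real.sqrt 3)/4)) = Real.sqrt 3 * ellK (Real.sqrt ((2-Real.sqrt 3)/4)) := by
  have h3 := r3_pos
  have h3sq := r3_sq
  have hr2 : Real.sqrt 3 < 2 := by nlinarith [Real.sqrt_nonneg 3]
  have hkp1 : Real.sqrt ((2+Real.sqrt 3)/4) < 1 :=
    (Real.sqrt_lt' one_pos).mpr (by nlinarith)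
  have hkm1 : Real.sqrt ((2-Real.sqrt 3)/4) < 1 :=
    (Real.sqrt_lt' one_pos).mpr (by nlinarith)
  have hkp : (Real.sqrt ((2+Real.sqrt 3)/4))^2 = (2+Real.sqrt 3)/4 :=
    Real.sq_sqrt (by positivity)
  have hkm : (Real.sqrt ((2-Real.sqrt 3)/4))^2 = (2-Real.sqrt 3)/4 :=
    Real.sq_sqrt (by linarith)
  have hqp := ellK_eq_quartic (Real.sqrt_nonneg ((2+Real.sqrt 3)/4)) hkp1
  have hqm := ellK_eq_quartic (Real.sqrt_nonneg ((2-Real.sqrt 3)/4)) hkm1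
  have hcp : 1 - 2*(Real.sqrt ((2+Real.sqrt 3)/4))^2 = (-1)*Real.sqrt 3/2 := by
    rw [hkp]; ring
  have hcm : 1 - 2*(Real.sqrt ((2-Real.sqrt 3)/4))^2 = (1:ℝ)*Real.sqrt 3/2 := by
    rw [hkm]; ring
  rw [hcp] at hqp
  rw [hcm] at hqm
  -- cubic chains
  have hdm : ((-1:ℝ))^2 = 1 := by norm_num
  have hdp : ((1:ℝ))^2 = 1 := by norm_num
  have hA := cubic_split hdm
  rw [cubic_lower hdm, cubic_upper hdm] at hA
  have hB := cubic_split hdp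
  rw [cubic_lower hdp, cubic_upper hdp] at hB
  have hfeq : (fun x : ℝ => 1/Real.sqrt (x^3 - (-1))) = fun x : ℝ => 1/Real.sqrt (x^3+1) := by
    funext x; norm_num
  rw [hfeq] at hA
  have hlink := isoA
  rw [hA, hB] at hlink
  set C := 2*Real.sqrt 3/Real.sqrt (3*Real.sqrt 3) with hC
  set Im : ℝ := ∫ s in Ioo (0:ℝ) 1, fQ ((-1)*Real.sqrt 3/2) s with hIm
  set Ip : ℝ := ∫ s in Ioo (0:ℝ) 1, fQ ((1:ℝ)*Real.sqrt 3/2) s with hIp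
  have hCpos : 0 < C := by
    rw [hC]
    exact div_pos (by positivity) (Real.sqrt_pos.mpr r33_pos)
  have hkey : Im = Real.sqrt 3 * Ip := by
    have h2C : (2*C) ≠ 0 := by positivity
    apply mul_left_cancel₀ h2C
    calc 2*C*Im = C*Im + C*Im := by ring
      _ = Real.sqrt 3 * (C*Ip + C*Ip) := hlink
      _ = 2*C*(Real.sqrt 3 * Ip) := by ring
  rw [hqp, hqm, hkey]
  ring

lemma ellK_neg_pos : 0 < ellK (Real.sqrt ((2-Real.sqrt 3)/4)) := by
  have h3 := r3_pos
  have h3sq := r3_sq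
  have hr2 : Real.sqrt 3 < 2 := by nlinarith [Real.sqrt_nonneg 3]
  have hkm1 : Real.sqrt ((2-Real.sqrt 3)/4) < 1 :=
    (Real.sqrt_lt' one_pos).mpr (by nlinarith)
  have hkm : (Real.sqrt ((2-Real.sqrt 3)/4))^2 = (2-Real.sqrt 3)/4 :=
    Real.sq_sqrt (by linarith)
  rw [ellK_eq_quartic (Real.sqrt_nonneg ((2-Real.sqrt 3)/4)) hkm1]
  have hc : 1 - 2*(Real.sqrt ((2-Real.sqrt 3)/4))^2 = Real.sqrt 3/2 := by rw [hkm]; ring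
  rw [hc]
  have hQpos : ∀ s : ℝ, 0 < s^4 + 2*(Real.sqrt 3/2)*s^2 + 1 := by
    intro s
    have := Real.sqrt_nonneg 3
    nlinarith [sq_nonneg (s^2), sq_nonneg s, mul_nonneg (Real.sqrt_nonneg 3) (sq_nonneg s)]
  have hcont : Continuous (fun s : ℝ => fQ (Real.sqrt 3/2) s) := by
    apply Continuous.div continuous_const
    · exact Real.continuous_sqrt.comp (by continuity)
    · exact fun s => ne_of_gt (Real.sqrt_pos.mpr (hQpos s))
  have hpos : ∀ s : ℝ, 0 < fQ (Real.sqrt 3/2) s := by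
    intro s
    exact div_pos one_pos (Real.sqrt_pos.mpr (hQpos s))
  have h1 : ∫ s in Ioo (0:ℝ) 1, fQ (Real.sqrt 3/2) s
      = ∫ s in (0:ℝ)..1, fQ (Real.sqrt 3/2) s := by
    rw [intervalIntegral.integral_of_le zero_le_one, MeasureTheory.integral_Ioc_eq_integral_Ioo]
  rw [h1]
  have := intervalIntegral.intervalIntegral_pos_of_pos
    (hcont.intervalIntegrable 0 1) hpos zero_lt_one
  linarith

lemma numeric_bound : |4 * Real.sqrt 3 - 6.9282032302755| ≤ 2.74e-14 := by
  have h3sq := r3_sq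
  have h3nn := Real.sqrt_nonneg 3
  rw [abs_le]
  constructor <;> nlinarith [sq_nonneg (Real.sqrt 3 - 1.7320508075688772), sq_nonneg (Real.sqrt 3 - 1.7320508075688773)]

/-- The extremal length of a staple curve on the cube punctured at its vertices:
with `a = (1+√3)/√2` and `t = 1 + 1/a⁴`, the quantity `4 (K/K')(1/√t)`
lies within `2.74 × 10⁻¹⁴` of `6.9282032302755`. -/
theorem staple_curve_extremal_length :
    let a : ℝ := (1 + Real.sqrt 3) / Real.sqrt 2
    let t : ℝ := 1 + 1 / a ^ 4
    |4 * ellK (1 / Real.sqrt t) / ellK' (1 / Real.sqrt t) - 6.9282032302755| ≤ 2.74e-14 := by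
  intro a t
  have h3sq := r3_sq
  have h3 := r3_pos
  have hr2 : Real.sqrt 3 < 2 := by nlinarith [Real.sqrt_nonneg 3]
  have h2sq : (Real.sqrt 2)^2 = 2 := Real.sq_sqrt (by norm_num)
  have h2pos : (0:ℝ) < Real.sqrt 2 := Real.sqrt_pos.mpr (by norm_num)
  have ha2 : a^2 = 2 + Real.sqrt 3 := by
    show ((1 + Real.sqrt 3)/Real.sqrt 2)^2 = 2 + Real.sqrt 3
    rw [div_pow, h2sq, div_eq_iff (by norm_num : (2:ℝ) ≠ 0)]
    linear_combination h3sq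
  have ha4 : a^4 = 7 + 4*Real.sqrt 3 := by
    have h : a^4 = (a^2)^2 := by ring
    rw [h, ha2]
    linear_combination h3sq
  have hti : t = 8 - 4*Real.sqrt 3 := by
    show 1 + 1/a^4 = 8 - 4*Real.sqrt 3
    rw [ha4]
    have h7 : (0:ℝ) < 7 + 4*Real.sqrt 3 := by positivity
    field_simp
    linear_combination 16*h3sq
  have ht8 : (0:ℝ) < 8 - 4*Real.sqrt 3 := by nlinarith
  have harg : 1/Real.sqrt t = Real.sqrt ((2+Real.sqrt 3)/4) := by
    rw [one_div, ← Real.sqrt_inv]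
    congr 1
    rw [hti, inv_eq_one_div, div_eq_div_iff (by nlinarith : (8:ℝ) - 4*Real.sqrt 3 ≠ 0) (by norm_num : (4:ℝ) ≠ 0)]
    linear_combination 4*h3sq
  rw [harg, ellK']
  have hsub : (1:ℝ) - (Real.sqrt ((2+Real.sqrt 3)/4))^2 = (2-Real.sqrt 3)/4 := by
    rw [Real.sq_sqrt (by positivity)]
    ring
  rw [hsub, core_identity]
  have hKpos := ellK_neg_pos
  rw [show 4 * (Real.sqrt 3 * ellK (Real.sqrt ((2-Real.sqrt 3)/4)))
      = (4*Real.sqrt 3) * ellK (Real.sqrt ((2-Real.sqrt 3)/4)) from by ring,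
    mul_div_cancel_right₀ _ (ne_of_gt hKpos)]
  exact numeric_bound
end

section
/- The complex sine function restricted to the open vertical strip S = {z ∈ ℂ : -π/2 < Re(z) < π/2} is a bijection from S onto ℂ \ ((-∞,-1] ∪ [1,∞)), where (-∞,-1] and [1,∞) denote the corresponding rays of the real axis viewed as subsets of ℂ. -/
open Complex Set

private lemma sin_as_exp (z : ℂ) :
    Complex.sin z = (Complex.exp (z * I) - Complex.exp (-z * I)) / (2 * I) := by
  rw [Complex.sin, eq_div_iff (by simp [Complex.I_ne_zero] : (2 * I : ℂ) ≠ 0)]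
  linear_combination (Complex.exp (-z * I) - Complex.exp (z * I)) * Complex.I_sq

private lemma mem_target_iff (w : ℂ) :
    w ∈ (Set.univ \ ((fun x : ℝ => (x : ℂ)) '' Set.Iic (-1) ∪
        (fun x : ℝ => (x : ℂ)) '' Set.Ici 1)) ↔
    ¬(w.im = 0 ∧ (w.re ≤ -1 ∨ 1 ≤ w.re)) := by
  constructor
  · rintro ⟨-, hw⟩ ⟨him, hre⟩
    apply hw
    rcases hre with h | h
    · exact Or.inl ⟨w.re, h, Complex.ext rfl him.symm⟩
    · exact Or.inr ⟨w.re, h, Complex.ext rfl him.symm⟩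
  · intro h
    refine ⟨trivial, ?_⟩
    rintro (⟨x, hx, rfl⟩ | ⟨x, hx, rfl⟩)
    · exact h ⟨Complex.ofReal_im x, Or.inl (by simpa using hx)⟩
    · exact h ⟨Complex.ofReal_im x, Or.inr (by simpa using hx)⟩

/-- If `u` is purely imaginary and nonzero, `(u - u⁻¹)/(2i)` lies on the excluded rays. -/
private lemma pure_imag_ray {u : ℂ} (hu : u ≠ 0) (hre : u.re = 0) :
    ((u - u⁻¹) / (2 * I)).im = 0 ∧
      (((u - u⁻¹) / (2 * I)).re ≤ -1 ∨ 1 ≤ ((u - u⁻¹) / (2 * I)).re) := by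
  set t := u.im with ht
  have ht0 : t ≠ 0 := fun h => hu (Complex.ext hre h)
  have htC : (t : ℂ) ≠ 0 := Complex.ofReal_ne_zero.mpr ht0
  have hu' : u = (t : ℂ) * I := by apply Complex.ext <;> simp [hre, ht]
  have h1 : ((t : ℂ) * I) * (-(t : ℂ)⁻¹ * I) = 1 := by
    field_simp
    linear_combination -Complex.I_sq
  have h2 : u - u⁻¹ = (((t + t⁻¹ : ℝ)) : ℂ) * I := by
    rw [hu', inv_eq_of_mul_eq_one_right h1]
    push_cast
    ring
  have hval : (u - u⁻¹) / (2 * I) = (((t + t⁻¹) / 2 : ℝ) : ℂ) := by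
    rw [h2, div_eq_iff (by simp [Complex.I_ne_zero] : (2 * I : ℂ) ≠ 0)]
    push_cast
    ring
  rw [hval]
  refine ⟨Complex.ofReal_im _, ?_⟩
  simp only [Complex.ofReal_re]
  have hinv : t * t⁻¹ = 1 := mul_inv_cancel₀ ht0
  rcases lt_or_gt_of_ne ht0 with h | h
  · left; nlinarith [sq_nonneg (t + 1)]
  · right; nlinarith [sq_nonneg (t - 1)]

/-- The complex sine function maps the open vertical strip `{-π/2 < Re z < π/2}`
bijectively onto the complement in `ℂ` of the two closed real rays `(-∞,-1]` and `[1,∞)`. -/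
theorem sin_bijOn_strip :
    Set.BijOn Complex.sin
      { z : ℂ | -(Real.pi / 2) < z.re ∧ z.re < Real.pi / 2 }
      (Set.univ \ ((fun x : ℝ => (x : ℂ)) '' Set.Iic (-1) ∪
        (fun x : ℝ => (x : ℂ)) '' Set.Ici 1)) := by
  refine ⟨?_, ?_, ?_⟩
  · -- MapsTo
    intro z hz
    obtain ⟨h1, h2⟩ := hz
    rw [mem_target_iff]
    rintro ⟨him, hre⟩
    have hsin := Complex.sin_eq z
    have hcos : 0 < Real.cos z.re := Real.cos_pos_of_mem_Ioo ⟨h1, h2⟩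
    have hb : z.im = 0 := by
      have h := congrArg Complex.im hsin
      rw [him] at h
      simp [Complex.cos_ofReal_re, Complex.sinh_ofReal_re, Real.sinh_eq_zero] at h
      rcases h with h | h
      · exact absurd h (ne_of_gt hcos)
      · exact h
    have hre' : (Complex.sin z).re = Real.sin z.re := by
      have h := congrArg Complex.re hsin
      rw [hb] at h
      simpa [Complex.sin_ofReal_re, Complex.cosh_ofReal_re] using h
    have hπ := Real.pi_pos
    have hmem : z.re ∈ Set.Icc (-(Real.pi / 2)) (Real.pi / 2) := ⟨h1.le, h2.le⟩
    have hlt : Real.sin z.re < 1 := by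
      have := Real.strictMonoOn_sin hmem ⟨by linarith, le_refl _⟩ h2
      rwa [Real.sin_pi_div_two] at this
    have hgt : -1 < Real.sin z.re := by
      have := Real.strictMonoOn_sin ⟨le_refl _, by linarith⟩ hmem h1
      rwa [Real.sin_neg, Real.sin_pi_div_two] at this
    rcases hre with h | h <;> rw [hre'] at h <;> linarith
  · -- InjOn
    intro z1 hz1 z2 hz2 heq
    set u1 := Complex.exp (z1 * I) with hu1def
    set u2 := Complex.exp (z2 * I) with hu2def
    have hu1 : u1 ≠ 0 := Complex.exp_ne_zero _
    have hu2 : u2 ≠ 0 := Complex.exp_ne_zero _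
    have hr1 : 0 < u1.re := by
      rw [hu1def, Complex.exp_re, Complex.mul_I_re, Complex.mul_I_im]
      exact mul_pos (Real.exp_pos _) (Real.cos_pos_of_mem_Ioo ⟨hz1.1, hz1.2⟩)
    have hr2 : 0 < u2.re := by
      rw [hu2def, Complex.exp_re, Complex.mul_I_re, Complex.mul_I_im]
      exact mul_pos (Real.exp_pos _) (Real.cos_pos_of_mem_Ioo ⟨hz2.1, hz2.2⟩)
    have key : u1 - u1⁻¹ = u2 - u2⁻¹ := by
      have h := heq
      rw [sin_as_exp, sin_as_exp,
        div_eq_div_iff (by simp [Complex.I_ne_zero]) (by simp [Complex.I_ne_zero])] at h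
      have e1 : -z1 * I = -(z1 * I) := by ring
      have e2 : -z2 * I = -(z2 * I) := by ring
      rw [e1, e2, Complex.exp_neg, Complex.exp_neg] at h
      exact mul_right_cancel₀ (by simp [Complex.I_ne_zero]) h
    have hfac : (u1 - u2) * (u1 * u2 + 1) = 0 := by
      have hi1 : u1 * u1⁻¹ = 1 := mul_inv_cancel₀ hu1
      have hi2 : u2 * u2⁻¹ = 1 := mul_inv_cancel₀ hu2
      linear_combination u1 * u2 * key + u2 * hi1 - u1 * hi2
    rcases mul_eq_zero.mp hfac with h | h
    · have huv : u1 = u2 := sub_eq_zero.mp h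
      rw [hu1def, hu2def, Complex.exp_eq_exp_iff_exists_int] at huv
      obtain ⟨n, hn⟩ := huv
      have hn' : z1 * I = (z2 + (n : ℂ) * (2 * (Real.pi : ℂ))) * I := by
        rw [hn]; ring
      have hz12 : z1 = z2 + (n : ℂ) * (2 * (Real.pi : ℂ)) :=
        mul_right_cancel₀ Complex.I_ne_zero hn'
      have hre : z1.re = z2.re + (n : ℝ) * (2 * Real.pi) := by
        have h := congrArg Complex.re hz12
        push_cast at h
        simpa using h
      have hπ := Real.pi_pos
      obtain ⟨a1, a2⟩ := hz1
      obtain ⟨b1, b2⟩ := hz2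
      have hlt : (n : ℝ) < 1 := by nlinarith
      have hgt : (-1 : ℝ) < (n : ℝ) := by nlinarith
      have hn1 : n < 1 := by exact_mod_cast hlt
      have hn2 : (-1 : ℤ) < n := by exact_mod_cast hgt
      have hn0 : n = 0 := by omega
      rw [hn0] at hz12
      simpa using hz12
    · exfalso
      have hm : u1 * u2 = -1 := by linear_combination h
      have hu2e : u2 = -u1⁻¹ := by
        field_simp
        linear_combination hm
      have : u2.re = -(u1.re / Complex.normSq u1) := by
        rw [hu2e, Complex.neg_re, Complex.inv_re]
      have hpos : 0 < u1.re / Complex.normSq u1 :=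
        div_pos hr1 (Complex.normSq_pos.mpr hu1)
      linarith [hr2, this ▸ hr2]
  · -- SurjOn
    intro w hw
    rw [mem_target_iff] at hw
    obtain ⟨s, hs⟩ : ∃ s : ℂ, s ^ 2 = 1 - w ^ 2 :=
      IsAlgClosed.exists_pow_nat_eq (1 - w ^ 2) (by norm_num : 0 < 2)
    set u0 := I * w + s with hu0def
    set u1 := I * w - s with hu1def
    have hprod : u0 * u1 = -1 := by
      rw [hu0def, hu1def]
      linear_combination w ^ 2 * Complex.I_sq - hs
    have hne0 : u0 * u1 ≠ 0 := by rw [hprod]; norm_num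
    have hu0 : u0 ≠ 0 := left_ne_zero_of_mul hne0
    have hu1 : u1 ≠ 0 := right_ne_zero_of_mul hne0
    have hinv0 : u0⁻¹ = -u1 := inv_eq_of_mul_eq_one_right (by linear_combination -hprod)
    have hinv1 : u1⁻¹ = -u0 := inv_eq_of_mul_eq_one_right (by linear_combination -hprod)
    have h0 : u0 - u0⁻¹ = 2 * I * w := by rw [hinv0, hu0def, hu1def]; ring
    have h1 : u1 - u1⁻¹ = 2 * I * w := by rw [hinv1, hu0def, hu1def]; ring
    have hdiv : ∀ v : ℂ, v - v⁻¹ = 2 * I * w → (v - v⁻¹) / (2 * I) = w := by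
      intro v hv
      rw [hv, mul_div_cancel_left₀ w (by simp [Complex.I_ne_zero] : (2 * I : ℂ) ≠ 0)]
    have hne : u0.re ≠ 0 := by
      intro h
      obtain ⟨him, hre⟩ := pure_imag_ray hu0 h
      rw [hdiv u0 h0] at him hre
      exact hw ⟨him, hre⟩
    obtain ⟨u, hune, hupos, huw⟩ : ∃ u : ℂ, u ≠ 0 ∧ 0 < u.re ∧ u - u⁻¹ = 2 * I * w := by
      rcases lt_or_gt_of_ne hne with h | h
      · refine ⟨u1, hu1, ?_, h1⟩
        have he : u1 = -u0⁻¹ := by rw [hinv0]; ring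
        rw [he, Complex.neg_re, Complex.inv_re]
        have : u0.re / Complex.normSq u0 < 0 :=
          div_neg_of_neg_of_pos h (Complex.normSq_pos.mpr hu0)
        linarith
      · exact ⟨u0, hu0, h, h0⟩
    refine ⟨-I * Complex.log u, ?_, ?_⟩
    · have hre : (-I * Complex.log u).re = (Complex.log u).im := by simp
      rw [Set.mem_setOf_eq, hre, Complex.log_im]
      have habs := Complex.abs_arg_lt_pi_div_two_iff.mpr (Or.inl hupos)
      rw [abs_lt] at habs
      exact ⟨habs.1, habs.2⟩
    · rw [sin_as_exp]
      have e1 : -I * Complex.log u * I = Complex.log u := by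
        linear_combination (-(Complex.log u)) * Complex.I_sq
      have e2 : -(-I * Complex.log u) * I = -Complex.log u := by
        linear_combination Complex.log u * Complex.I_sq
      rw [e1, e2, Complex.exp_neg, Complex.exp_log hune, hdiv u huw]
end
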